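/- arXiv:2208.08471 — 10 statements merged into one kernel-verified Lean document; each statement's English description precedes it below -/
import Mathlib

section
/- Let U₁ and U₂ be independent random variables uniformly distributed on (0,1), and let θ₁, θ₂ > 0 with θ₁ + θ₂ = 1. Then for every p ∈ (0,1), ℙ((θ₁·U₁⁻¹ + θ₂·U₂⁻¹)⁻¹ ≤ p) > p; that is, the weighted harmonic mean of U₁ and U₂ is strictly first-order stochastically dominated by a uniform random variable on (0,1). -/
open MeasureTheory ProbabilityTheory Set

/-- `X` is a Pareto(α) random variable under `P`: `P(X > t) = t^{-α}` for `t ≥ 1`,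
and `X ≥ 1` almost surely. -/
def IsPareto {Ω : Type*} [MeasurableSpace Ω] (P : Measure Ω) (X : Ω → ℝ) (α : ℝ) : Prop :=
  Measurable X ∧ P {ω | 1 ≤ X ω} = 1 ∧
    ∀ t : ℝ, 1 ≤ t → P {ω | t < X ω} = ENNReal.ofReal (t ^ (-α))

/-- `U` is uniformly distributed on `(0,1)` under `P`. -/
def IsUniform01 {Ω : Type*} [MeasurableSpace Ω] (P : Measure Ω) (U : Ω → ℝ) : Prop :=
  Measurable U ∧ Measure.map U P = volume.restrict (Set.Ioo (0:ℝ) 1)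

/-- For independent uniform(0,1) random variables `U₁, U₂` and positive weights summing
to 1, the weighted harmonic mean is strictly first-order stochastically dominated by a
uniform(0,1) random variable: `P((θ₁/U₁ + θ₂/U₂)⁻¹ ≤ p) > p` for all `p ∈ (0,1)`. -/
theorem stmt0 {Ω : Type*} [MeasurableSpace Ω] (P : Measure Ω) [IsProbabilityMeasure P]
    (U₁ U₂ : Ω → ℝ) (hU₁ : IsUniform01 P U₁) (hU₂ : IsUniform01 P U₂)
    (hind : IndepFun U₁ U₂ P)
    (θ₁ θ₂ : ℝ) (h1 : 0 < θ₁) (h2 : 0 < θ₂) (hsum : θ₁ + θ₂ = 1) :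
    ∀ p ∈ Set.Ioo (0:ℝ) 1,
      ENNReal.ofReal p < P {ω | (θ₁ * (U₁ ω)⁻¹ + θ₂ * (U₂ ω)⁻¹)⁻¹ ≤ p} := by
  obtain ⟨hm1, hmap1⟩ := hU₁
  obtain ⟨hm2, hmap2⟩ := hU₂
  rintro p ⟨hp0, hp1⟩
  have h2p : 0 < 1 - θ₂ * p := by nlinarith
  have h1p : 0 < 1 - θ₁ * p := by nlinarith
  set a : ℝ := θ₁ * p / (1 - θ₂ * p) with ha_def
  set b : ℝ := θ₂ * p / (1 - θ₁ * p) with hb_def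
  have ha0 : 0 < a := div_pos (by positivity) h2p
  have hb0 : 0 < b := div_pos (by positivity) h1p
  have ha1 : a < 1 := (div_lt_one h2p).2 (by nlinarith)
  have hb1 : b < 1 := (div_lt_one h1p).2 (by nlinarith)
  have haeq : a * (1 - θ₂ * p) = θ₁ * p := div_mul_cancel₀ _ h2p.ne'
  have hbeq : b * (1 - θ₁ * p) = θ₂ * p := div_mul_cancel₀ _ h1p.ne'
  -- the key real inequality
  have hkey : p < a + b - a * b := by
    have hsump : θ₁ * p + θ₂ * p = p := by rw [← add_mul, hsum, one_mul]
    have habb : a * (1 - θ₂ * p) * b = θ₁ * p * b := by rw [haeq]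
    nlinarith [haeq, hbeq, habb, hsump,
      mul_pos (mul_pos (mul_pos ha0 h2) hp0) (sub_pos.2 hb1)]
  -- measure computations
  set C : Set Ω := U₁ ⁻¹' Ici a ∩ U₂ ⁻¹' Ici b with hC_def
  set G : Set Ω := U₁ ⁻¹' Ioo 0 1 ∩ U₂ ⁻¹' Ioo 0 1 with hG_def
  have hmeasC : MeasurableSet C := (hm1 measurableSet_Ici).inter (hm2 measurableSet_Ici)
  have hmeasG : MeasurableSet G := (hm1 measurableSet_Ioo).inter (hm2 measurableSet_Ioo)
  have hIci : ∀ (c : ℝ), 0 < c → c < 1 → Ici c ∩ Ioo (0:ℝ) 1 = Ico c 1 := by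
    intro c hc0 hc1
    ext x
    simp only [mem_inter_iff, mem_Ici, mem_Ioo, mem_Ico]
    constructor
    · rintro ⟨h1, _, h3⟩; exact ⟨h1, h3⟩
    · rintro ⟨h1, h2⟩; exact ⟨h1, lt_of_lt_of_le hc0 h1, h2⟩
  have hP1 : P (U₁ ⁻¹' Ici a) = ENNReal.ofReal (1 - a) := by
    rw [← Measure.map_apply hm1 measurableSet_Ici, hmap1,
      Measure.restrict_apply measurableSet_Ici, hIci a ha0 ha1, Real.volume_Ico]
  have hP2 : P (U₂ ⁻¹' Ici b) = ENNReal.ofReal (1 - b) := by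
    rw [← Measure.map_apply hm2 measurableSet_Ici, hmap2,
      Measure.restrict_apply measurableSet_Ici, hIci b hb0 hb1, Real.volume_Ico]
  have hPC : P C = ENNReal.ofReal ((1 - a) * (1 - b)) := by
    rw [hC_def, hind.measure_inter_preimage_eq_mul _ _ measurableSet_Ici measurableSet_Ici,
      hP1, hP2, ENNReal.ofReal_mul (by linarith)]
  have hPG : P G = 1 := by
    have hg1 : P (U₁ ⁻¹' Ioo 0 1) = 1 := by
      rw [← Measure.map_apply hm1 measurableSet_Ioo, hmap1,
        Measure.restrict_apply measurableSet_Ioo, inter_self, Real.volume_Ioo]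
      simp
    have hg2 : P (U₂ ⁻¹' Ioo 0 1) = 1 := by
      rw [← Measure.map_apply hm2 measurableSet_Ioo, hmap2,
        Measure.restrict_apply measurableSet_Ioo, inter_self, Real.volume_Ioo]
      simp
    have hc2 : P ((U₂ ⁻¹' Ioo (0:ℝ) 1)ᶜ) = 0 := by
      have h := measure_compl (μ := P) (s := U₂ ⁻¹' Ioo (0:ℝ) 1)
        (hm2 measurableSet_Ioo) (measure_ne_top P _)
      rw [hg2, measure_univ] at h
      simpa using h
    rw [hG_def, measure_inter_conull hc2]
    exact hg1
  have hPGc : P Gᶜ = 0 := by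
    rw [measure_compl hmeasG (measure_ne_top P _), hPG, measure_univ]
    simp
  -- inclusion of the union event in the target event
  have hsub : Cᶜ ∩ G ⊆ {ω | (θ₁ * (U₁ ω)⁻¹ + θ₂ * (U₂ ω)⁻¹)⁻¹ ≤ p} := by
    rintro ω ⟨hc, hg1, hg2⟩
    simp only [hC_def, mem_inter_iff, mem_preimage, mem_Ici, not_and_or, not_le,
      mem_compl_iff] at hc
    simp only [hG_def, mem_preimage, mem_Ioo] at hg1 hg2
    have hS : p⁻¹ < θ₁ * (U₁ ω)⁻¹ + θ₂ * (U₂ ω)⁻¹ := by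
      rcases hc with hlt | hlt
      · have hinv : a⁻¹ < (U₁ ω)⁻¹ := by
          apply inv_strictAnti₀ hg1.1 hlt
        have h1a : θ₁ * a⁻¹ = (1 - θ₂ * p) / p := by
          rw [ha_def]
          field_simp
        have hother : 1 < (U₂ ω)⁻¹ := (one_lt_inv₀ hg2.1).2 hg2.2
        have : (1 - θ₂ * p) / p + θ₂ = p⁻¹ := by field_simp; ring
        nlinarith [mul_lt_mul_of_pos_left hinv h1, mul_lt_mul_of_pos_left hother h2]
      · have hinv : b⁻¹ < (U₂ ω)⁻¹ := by
          apply inv_strictAnti₀ hg2.1 hlt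
        have h1b : θ₂ * b⁻¹ = (1 - θ₁ * p) / p := by
          rw [hb_def]
          field_simp
        have hother : 1 < (U₁ ω)⁻¹ := (one_lt_inv₀ hg1.1).2 hg1.2
        have : (1 - θ₁ * p) / p + θ₁ = p⁻¹ := by field_simp; ring
        nlinarith [mul_lt_mul_of_pos_left hinv h2, mul_lt_mul_of_pos_left hother h1]
    have hSpos : 0 < θ₁ * (U₁ ω)⁻¹ + θ₂ * (U₂ ω)⁻¹ := lt_trans (by positivity) hS
    exact le_of_lt (inv_lt_of_inv_lt₀ hp0 hS)
  -- conclude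
  have hPCc : P Cᶜ = ENNReal.ofReal (a + b - a * b) := by
    rw [measure_compl hmeasC (measure_ne_top P _), hPC, measure_univ,
      ← ENNReal.ofReal_one, ← ENNReal.ofReal_sub _ (by nlinarith : (0:ℝ) ≤ (1-a)*(1-b))]
    ring_nf
  have hle : P Cᶜ ≤ P (Cᶜ ∩ G) := by
    have hsplit : Cᶜ ⊆ (Cᶜ ∩ G) ∪ Gᶜ := by
      intro x hx
      by_cases h : x ∈ G
      · exact Or.inl ⟨hx, h⟩
      · exact Or.inr h
    calc P Cᶜ ≤ P ((Cᶜ ∩ G) ∪ Gᶜ) := measure_mono hsplit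
      _ ≤ P (Cᶜ ∩ G) + P Gᶜ := measure_union_le _ _
      _ = P (Cᶜ ∩ G) := by rw [hPGc, add_zero]
  calc ENNReal.ofReal p < ENNReal.ofReal (a + b - a * b) := by
        rw [ENNReal.ofReal_lt_ofReal_iff (by linarith)]; exact hkey
    _ = P Cᶜ := hPCc.symm
    _ ≤ P (Cᶜ ∩ G) := hle
    _ ≤ _ := measure_mono hsub
end

section
/- Let U, U₁, …, Uₙ be iid random variables uniformly distributed on (0,1) and let (θ₁,…,θₙ) be nonnegative weights summing to 1. Then for every p ∈ (0,1), ℙ((∑ᵢ θᵢ Uᵢ⁻¹)⁻¹ ≤ p) ≥ p = ℙ(U ≤ p); i.e., the weighted harmonic mean M₋₁(U₁,…,Uₙ) = (∑ᵢ θᵢ/Uᵢ)⁻¹ satisfies M₋₁(U₁,…,Uₙ) ≤_st U. -/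
open MeasureTheory ProbabilityTheory Set

open scoped ENNReal
set_option maxHeartbeats 1600000


lemma slice_eq (θ c t w : ℝ) (hθ0 : 0 < θ) (hc : 0 < c) (ht : 1 ≤ t) (hθc : θ + c = 1) :
    {x : ℝ | t < θ * x⁻¹ + c * w} ∩ Ioo 0 1
      = Ioo 0 (min 1 (θ / (t - c * min w ((t - θ)/c)))) := by
  set b := (t - θ)/c with hb
  have hcb : c * b = t - θ := by rw [hb]; field_simp
  have hd : θ ≤ t - c * min w b := by
    have : c * min w b ≤ c * b := mul_le_mul_of_nonneg_left (min_le_right _ _) hc.le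
    linarith
  have hdpos : 0 < t - c * min w b := lt_of_lt_of_le hθ0 hd
  ext x
  simp only [mem_inter_iff, mem_setOf_eq, mem_Ioo]
  constructor
  · rintro ⟨hx, hx0, hx1⟩
    refine ⟨hx0, lt_min hx1 ?_⟩
    rw [lt_div_iff₀ hdpos]
    have hx' : (t - c * w) * x < θ := by
      have h1 : t - c * w < θ / x := by
        have : θ * x⁻¹ = θ / x := by rw [div_eq_mul_inv]
        linarith [this ▸ hx]
      exact (lt_div_iff₀ hx0).mp h1
    rcases le_total w b with hwb | hbw
    · rw [min_eq_left hwb]; nlinarith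
    · rw [min_eq_right hbw]
      have : x * (t - c * b) = x * θ := by rw [hcb]; ring
      nlinarith
  · rintro ⟨hx0, hxm⟩
    have hx1 : x < 1 := lt_of_lt_of_le hxm (min_le_left _ _)
    have hxd : x * (t - c * min w b) < θ :=
      (lt_div_iff₀ hdpos).mp (lt_of_lt_of_le hxm (min_le_right _ _))
    refine ⟨?_, hx0, hx1⟩
    have key : (t - c * w) * x < θ := by
      rcases le_total w b with hwb | hbw
      · rw [min_eq_left hwb] at hxd; nlinarith
      · rw [min_eq_right hbw] at hxd
        have h2 : c * b ≤ c * w := mul_le_mul_of_nonneg_left hbw hc.le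
        nlinarith
    have h3 : t - c * w < θ / x := (lt_div_iff₀ hx0).mpr key
    have hθx : θ * x⁻¹ = θ / x := by rw [div_eq_mul_inv]
    linarith [h3]

lemma core {α : Type*} [MeasurableSpace α] (ν : Measure α) [IsProbabilityMeasure ν]
    (W : α → ℝ) (hW : Measurable W)
    (hsurv : ∀ s : ℝ, 1 ≤ s → ENNReal.ofReal s⁻¹ ≤ ν {y | s < W y})
    (θ : ℝ) (hθ0 : 0 < θ) (hθ1 : θ < 1) (t : ℝ) (ht : 1 ≤ t) :
    ENNReal.ofReal t⁻¹ ≤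
      ((volume.restrict (Ioo (0:ℝ) 1)).prod ν)
        {p : ℝ × α | t < θ * p.1⁻¹ + (1 - θ) * W p.2} := by
  set c : ℝ := 1 - θ with hcdef
  have hc : 0 < c := by rw [hcdef]; linarith
  have hθc : θ + c = 1 := by rw [hcdef]; ring
  have ht0 : (0:ℝ) < t := lt_of_lt_of_le one_pos ht
  have htc : θ ≤ t - c := by linarith
  have htcpos : 0 < t - c := lt_of_lt_of_le hθ0 htc
  set b : ℝ := (t - θ)/c with hbdef
  have hb1 : 1 ≤ b := by rw [hbdef, le_div_iff₀ hc]; linarith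
  set r₀ : ℝ := θ / (t - c) with hr₀def
  have hr₀pos : 0 < r₀ := div_pos hθ0 htcpos
  have hr₀le1 : r₀ ≤ 1 := by rw [hr₀def, div_le_one htcpos]; linarith
  have hr₀tc : r₀ * (t - c) = θ := div_mul_cancel₀ _ (ne_of_gt htcpos)
  set f : ℝ → ℝ := fun w => min 1 (θ / (t - c * min w b)) with hfdef
  have hdf : ∀ w, θ ≤ t - c * min w b := by
    intro w
    have hcb : c * b = t - θ := by rw [hbdef]; field_simp
    have : c * min w b ≤ c * b := mul_le_mul_of_nonneg_left (min_le_right _ _) hc.le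
    linarith
  have hdpos : ∀ w, 0 < t - c * min w b := fun w => lt_of_lt_of_le hθ0 (hdf w)
  have hf_nonneg : ∀ w, 0 ≤ f w := fun w =>
    le_min zero_le_one (div_nonneg hθ0.le (hdpos w).le)
  have hf_cont : Continuous f := by
    apply Continuous.min continuous_const
    apply Continuous.div continuous_const
    · continuity
    · exact fun w => ne_of_gt (hdpos w)
  have hgmeas : Measurable fun p : ℝ × α => θ * p.1⁻¹ + c * W p.2 := by
    apply Measurable.add
    · exact (measurable_fst.inv).const_mul θ
    · exact (hW.comp measurable_snd).const_mul c
  have hSmeas : MeasurableSet {p : ℝ × α | t < θ * p.1⁻¹ + c * W p.2} :=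
    measurableSet_lt measurable_const hgmeas
  rw [Measure.prod_apply_symm hSmeas]
  have hslice : ∀ y : α,
      (volume.restrict (Ioo (0:ℝ) 1)) ((fun x => (x, y)) ⁻¹' {p : ℝ × α | t < θ * p.1⁻¹ + c * W p.2})
        = ENNReal.ofReal (f (W y)) := by
    intro y
    have hpre : (fun x => (x, y)) ⁻¹' {p : ℝ × α | t < θ * p.1⁻¹ + c * W p.2}
        = {x : ℝ | t < θ * x⁻¹ + c * W y} := rfl
    rw [hpre, Measure.restrict_apply (measurableSet_lt measurable_const (by measurability)),
      slice_eq θ c t (W y) hθ0 hc ht hθc, Real.volume_Ioo]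
    simp [hfdef, hbdef]
  simp_rw [hslice]
  rw [lintegral_eq_lintegral_meas_lt ν (Filter.Eventually.of_forall fun y => hf_nonneg (W y))
    (hf_cont.measurable.comp hW).aemeasurable]
  -- F is the survival function of f ∘ W
  set F : ℝ → ℝ≥0∞ := fun r => ν {y | r < f (W y)} with hFdef
  have hFmeas : Measurable F := by
    apply Antitone.measurable
    intro r r' hrr'
    exact measure_mono fun y hy => lt_of_le_of_lt hrr' hy
  have hWgt1 : ν {y | 1 < W y} = 1 := by
    refine le_antisymm prob_le_one ?_
    simpa using hsurv 1 le_rfl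
  -- pointwise bounds
  have hf_ge_r₀ : ∀ w, 1 < w → r₀ ≤ f w := by
    intro w hw
    have h1 : (1:ℝ) ≤ min w b := le_min hw.le hb1
    have h2 : t - c * min w b ≤ t - c := by nlinarith
    have h3 : r₀ ≤ θ / (t - c * min w b) := by
      rw [hr₀def]
      exact div_le_div_of_nonneg_left hθ0.le (hdpos w) h2
    exact le_min hr₀le1 h3
  have hpart1 : ENNReal.ofReal r₀ ≤ ∫⁻ r in Ioo 0 r₀, F r := by
    have : ENNReal.ofReal r₀ = ∫⁻ _ in Ioo (0:ℝ) r₀, (1:ℝ≥0∞) := by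
      rw [setLIntegral_one, Real.volume_Ioo, sub_zero]
    rw [this]
    refine setLIntegral_mono hFmeas fun r hr => ?_
    calc (1:ℝ≥0∞) = ν {y | 1 < W y} := hWgt1.symm
      _ ≤ F r := measure_mono fun y hy =>
          lt_of_lt_of_le hr.2 (hf_ge_r₀ (W y) hy)
  have hpart2 : ∫⁻ r in Ioo r₀ 1, ENNReal.ofReal (c * r / (t * r - θ)) ≤ ∫⁻ r in Ioo r₀ 1, F r := by
    refine setLIntegral_mono hFmeas fun r hr => ?_
    obtain ⟨hrl, hru⟩ := hr
    have hr0 : 0 < r := lt_trans hr₀pos hrl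
    have hθrr : θ / r < t - c := by
      have : θ / r < θ / r₀ := div_lt_div_of_pos_left hθ0 hr₀pos hrl
      have he : θ / r₀ = t - c := by
        rw [hr₀def]; field_simp
      linarith [he ▸ this]
    set xr : ℝ := (t - θ/r)/c with hxrdef
    have hxr1 : 1 < xr := by
      rw [hxrdef, lt_div_iff₀ hc]; linarith
    have hcxr : c * xr = t - θ/r := by
      rw [hxrdef, mul_comm, div_mul_cancel₀ _ hc.ne']
    have hd1 : 0 < t - θ/r := by linarith
    have hd2 : 0 < t*r - θ := by
      have := (div_lt_iff₀ hr0).mp hθrr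
      nlinarith
    have hinv : xr⁻¹ = c * r / (t * r - θ) := by
      rw [hxrdef, inv_div, div_eq_div_iff hd1.ne' hd2.ne']
      field_simp
    calc ENNReal.ofReal (c * r / (t * r - θ)) = ENNReal.ofReal xr⁻¹ := by rw [hinv]
      _ ≤ ν {y | xr < W y} := hsurv xr hxr1.le
      _ ≤ F r := by
        refine measure_mono fun y hy => ?_
        simp only [mem_setOf_eq] at hy ⊢
        have hxrb : xr < b := by
          rw [hxrdef, hbdef, div_lt_div_iff₀ hc hc]
          have : θ < θ / r := by
            rw [lt_div_iff₀ hr0]; nlinarith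
          nlinarith
        have hminxr : xr < min (W y) b := lt_min hy hxrb
        have hdr : t - c * min (W y) b < θ / r := by
          have : c * xr < c * min (W y) b := mul_lt_mul_of_pos_left hminxr hc
          rw [hcxr] at this; linarith
        have : r < θ / (t - c * min (W y) b) := by
          rw [lt_div_iff₀ (hdpos (W y))]
          have := (lt_div_iff₀ hr0).mp hdr
          nlinarith
        exact lt_min hru this
  -- the explicit integral
  set g : ℝ → ℝ := fun r => c * r / (t * r - θ) with hgdef
  set H : ℝ → ℝ := fun r => (c/t) * r + (c*θ/t^2) * Real.log (t*r - θ) with hHdef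
  have hden : ∀ r, r₀ ≤ r → 0 < t * r - θ := by
    intro r hrr
    have h1 : t * r₀ - θ = θ * c / (t - c) := by rw [eq_div_iff htcpos.ne']; linear_combination t * hr₀tc
    have h2 : 0 < θ * c / (t - c) := div_pos (mul_pos hθ0 hc) htcpos
    nlinarith
  have hderiv : ∀ r ∈ uIcc r₀ 1, HasDerivAt H (g r) r := by
    intro r hr
    rw [uIcc_of_le hr₀le1] at hr
    have hd0 : 0 < t * r - θ := hden r hr.1
    have h1 : HasDerivAt (fun r : ℝ => t * r - θ) t r := by
      simpa using ((hasDerivAt_id r).const_mul t).sub_const θ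
    have h2 : HasDerivAt (fun r : ℝ => Real.log (t*r - θ)) (t / (t*r - θ)) r := by
      simpa using h1.log (ne_of_gt hd0)
    have h3 : HasDerivAt H ((c/t) * 1 + (c*θ/t^2) * (t / (t*r - θ))) r := by
      exact (((hasDerivAt_id r).const_mul (c/t)).add (h2.const_mul (c*θ/t^2)))
    convert h3 using 1
    rw [hgdef]
    field_simp [hd0.ne', ht0.ne']
    have hne : r * t - θ ≠ 0 := by rw [mul_comm r t]; exact hd0.ne'
    linear_combination mul_inv_cancel₀ hne
  have hgcont : ContinuousOn g (uIcc r₀ 1) := by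
    rw [uIcc_of_le hr₀le1]
    apply ContinuousOn.div (continuousOn_const.mul continuousOn_id)
      ((continuousOn_const.mul continuousOn_id).sub continuousOn_const)
    exact fun r hr => ne_of_gt (hden r hr.1)
  have hFTC : ∫ r in r₀..1, g r = H 1 - H r₀ :=
    intervalIntegral.integral_eq_sub_of_hasDerivAt hderiv (hgcont.intervalIntegrable)
  have hg_nonneg : ∀ r ∈ Ioo r₀ 1, 0 ≤ g r := by
    intro r hr
    exact div_nonneg (by nlinarith [hr.1, hr₀pos] : 0 ≤ c * r) (hden r hr.1.le).le
  have hIntOn : IntegrableOn g (Ioo r₀ 1) volume := by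
    have : IntegrableOn g (Icc r₀ 1) volume := by
      apply ContinuousOn.integrableOn_Icc
      rwa [uIcc_of_le hr₀le1] at hgcont
    exact this.mono_set Ioo_subset_Icc_self
  have hlin : ∫⁻ r in Ioo r₀ 1, ENNReal.ofReal (g r) = ENNReal.ofReal (H 1 - H r₀) := by
    rw [← ofReal_integral_eq_lintegral_ofReal hIntOn
      ((ae_restrict_iff' measurableSet_Ioo).mpr (Filter.Eventually.of_forall hg_nonneg))]
    congr 1
    rw [← hFTC, intervalIntegral.integral_of_le hr₀le1, ← integral_Ioc_eq_integral_Ioo]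
  -- final chain
  have hdisj : Disjoint (Ioo (0:ℝ) r₀) (Ioo r₀ 1) := by
    rw [Set.Ioo_disjoint_Ioo]
    exact le_trans (min_le_left _ _) (le_max_right _ _)
  have hsplit : (∫⁻ r in Ioo (0:ℝ) r₀, F r) + ∫⁻ r in Ioo r₀ 1, F r ≤ ∫⁻ r in Ioi (0:ℝ), F r := by
    rw [← lintegral_union measurableSet_Ioo hdisj]
    apply lintegral_mono_set
    intro r hr
    rcases hr with h | h
    · exact h.1
    · exact lt_trans hr₀pos h.1
  have hsum2 : ENNReal.ofReal r₀ + ENNReal.ofReal (H 1 - H r₀) ≤ ∫⁻ r in Ioi (0:ℝ), F r := by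
    refine le_trans ?_ hsplit
    exact add_le_add hpart1 (hlin ▸ hpart2)
  refine le_trans ?_ hsum2
  refine le_trans (ENNReal.ofReal_le_ofReal ?_) (ENNReal.ofReal_add_le)
  -- real inequality: t⁻¹ ≤ r₀ + (H 1 - H r₀)
  have hkey : r₀ + (c/t) * (1 - r₀) = 1/t := by
    field_simp
    nlinarith [hr₀tc]
  have hlog : Real.log (t * r₀ - θ) ≤ Real.log (t * 1 - θ) := by
    apply Real.log_le_log (hden r₀ le_rfl)
    nlinarith
  have hcoef : 0 ≤ c*θ/t^2 * (Real.log (t*1 - θ) - Real.log (t*r₀ - θ)) := by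
    apply mul_nonneg (by positivity)
    linarith
  have hHexp : H 1 - H r₀ = (c/t) * (1 - r₀) + (c*θ/t^2) * (Real.log (t*1 - θ) - Real.log (t*r₀ - θ)) := by
    rw [hHdef]; ring
  rw [inv_eq_one_div]
  linarith [hkey, hcoef, hHexp]

noncomputable instance : IsProbabilityMeasure (volume.restrict (Set.Ioo (0:ℝ) 1)) :=
  ⟨by simp [Real.volume_Ioo]⟩

lemma uniform_inv_tail {t : ℝ} (ht : 1 ≤ t) :
    {x : ℝ | t < x⁻¹} ∩ Ioo 0 1 = Ioo 0 t⁻¹ := by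
  have ht0 : (0:ℝ) < t := lt_of_lt_of_le one_pos ht
  ext x
  simp only [mem_inter_iff, mem_setOf_eq, mem_Ioo]
  constructor
  · rintro ⟨hx, hx0, hx1⟩
    have h1 : t * x < 1 := by
      rw [inv_eq_one_div, lt_div_iff₀ hx0] at hx; linarith
    refine ⟨hx0, ?_⟩
    rw [inv_eq_one_div, lt_div_iff₀ ht0]; linarith
  · rintro ⟨hx0, hxt⟩
    have h1 : x * t < 1 := by
      rw [inv_eq_one_div, lt_div_iff₀ ht0] at hxt; linarith
    have hx1 : x < 1 := by nlinarith
    refine ⟨?_, hx0, hx1⟩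
    rw [inv_eq_one_div, lt_div_iff₀ hx0]; linarith

lemma lemB : ∀ (n : ℕ) (θ : Fin n → ℝ), (∀ i, 0 ≤ θ i) → ∑ i, θ i = 1 → ∀ t : ℝ, 1 ≤ t →
    ENNReal.ofReal t⁻¹ ≤
      Measure.pi (fun _ : Fin n => volume.restrict (Set.Ioo (0:ℝ) 1))
        {u | t < ∑ i, θ i * (u i)⁻¹} := by
  intro n
  induction n with
  | zero => intro θ _ hsum; simp at hsum
  | succ n ih =>
    intro θ hθ hsum t ht
    have ht0 : (0:ℝ) < t := lt_of_lt_of_le one_pos ht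
    have hmeas : MeasurableSet {u : Fin (n+1) → ℝ | t < ∑ i, θ i * (u i)⁻¹} := by
      apply measurableSet_lt measurable_const
      exact Finset.measurable_sum _ fun i _ => (measurable_pi_apply i).inv.const_mul _
    have hmp := (measurePreserving_piFinSuccAbove
      (fun _ : Fin (n+1) => volume.restrict (Set.Ioo (0:ℝ) 1)) 0).symm
    rw [← hmp.measure_preimage hmeas.nullMeasurableSet]
    have hset : (MeasurableEquiv.piFinSuccAbove (fun _ : Fin (n+1) => ℝ) 0).symm ⁻¹'
          {u : Fin (n+1) → ℝ | t < ∑ i, θ i * (u i)⁻¹}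
        = {p : ℝ × (Fin n → ℝ) |
            t < θ 0 * p.1⁻¹ + ∑ j : Fin n, θ j.succ * (p.2 j)⁻¹} := by
      ext ⟨x, y⟩
      simp only [mem_preimage, mem_setOf_eq, MeasurableEquiv.piFinSuccAbove_symm_apply,
        Fin.insertNthEquiv_zero, Fin.consEquiv_apply]
      rw [Fin.sum_univ_succ]
      simp
    rw [hset]
    have hsum' : θ 0 + ∑ j : Fin n, θ j.succ = 1 := by
      rw [← Fin.sum_univ_succ]; exact hsum
    set c : ℝ := ∑ j : Fin n, θ j.succ with hcdef
    have hcnonneg : 0 ≤ c := Finset.sum_nonneg fun j _ => hθ _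
    rcases eq_or_lt_of_le hcnonneg with hc0 | hcpos
    · -- c = 0 : all tail weights vanish, θ 0 = 1
      have hz : ∀ j : Fin n, θ j.succ = 0 := by
        intro j
        have := (Finset.sum_eq_zero_iff_of_nonneg (fun j _ => hθ _)).mp hc0.symm
        exact this j (Finset.mem_univ j)
      have hθ01 : θ 0 = 1 := by linarith
      have hset2 : {p : ℝ × (Fin n → ℝ) |
            t < θ 0 * p.1⁻¹ + ∑ j : Fin n, θ j.succ * (p.2 j)⁻¹}
          = {x : ℝ | t < x⁻¹} ×ˢ (univ : Set (Fin n → ℝ)) := by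
        ext ⟨x, y⟩
        have hzsum : ∑ j : Fin n, θ j.succ * (y j)⁻¹ = 0 :=
          Finset.sum_eq_zero fun j _ => by rw [hz j, zero_mul]
        simp [hθ01, hzsum]
      rw [hset2, Measure.prod_prod, measure_univ, mul_one,
        Measure.restrict_apply (measurableSet_lt measurable_const measurable_inv),
        uniform_inv_tail ht, Real.volume_Ioo]
      simp
    · -- c > 0
      rcases eq_or_lt_of_le (hθ 0) with hθ00 | hθ0pos
      · -- θ 0 = 0 : reduces to the tail
        have hc1 : c = 1 := by linarith
        have hset2 : {p : ℝ × (Fin n → ℝ) |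
              t < θ 0 * p.1⁻¹ + ∑ j : Fin n, θ j.succ * (p.2 j)⁻¹}
            = (univ : Set ℝ) ×ˢ {y : Fin n → ℝ | t < ∑ j : Fin n, θ j.succ * (y j)⁻¹} := by
          ext ⟨x, y⟩
          simp [← hθ00]
        rw [hset2, Measure.prod_prod, measure_univ, one_mul]
        exact ih (fun j => θ j.succ) (fun j => hθ _) hc1 t ht
      · -- 0 < θ 0 < 1 : apply the core lemma
        have hθ0lt1 : θ 0 < 1 := by linarith
        set W : (Fin n → ℝ) → ℝ := fun y => ∑ j : Fin n, (θ j.succ / c) * (y j)⁻¹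
          with hWdef
        have hWmeas : Measurable W :=
          Finset.measurable_sum _ fun j _ => (measurable_pi_apply j).inv.const_mul _
        have hsurv : ∀ s : ℝ, 1 ≤ s → ENNReal.ofReal s⁻¹ ≤
            Measure.pi (fun _ : Fin n => volume.restrict (Set.Ioo (0:ℝ) 1)) {y | s < W y} := by
          intro s hs
          exact ih (fun j => θ j.succ / c)
            (fun j => div_nonneg (hθ _) hcnonneg)
            (by rw [← Finset.sum_div, ← hcdef, div_self (ne_of_gt hcpos)]) s hs
        have hset2 : {p : ℝ × (Fin n → ℝ) |
              t < θ 0 * p.1⁻¹ + ∑ j : Fin n, θ j.succ * (p.2 j)⁻¹}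
            = {p : ℝ × (Fin n → ℝ) | t < θ 0 * p.1⁻¹ + (1 - θ 0) * W p.2} := by
          have h1mc : 1 - θ 0 = c := by linarith
          have hterm : ∀ (a v : ℝ), c * (a / c * v) = a * v := fun a v => by
            field_simp
          ext ⟨x, y⟩
          simp only [mem_setOf_eq, h1mc, hWdef]
          rw [Finset.mul_sum]
          rw [Finset.sum_congr rfl fun j (_ : j ∈ Finset.univ) => hterm (θ j.succ) ((y j)⁻¹)]
        rw [hset2]
        exact core _ W hWmeas hsurv (θ 0) hθ0pos hθ0lt1 t ht

lemma map_eq_pi {Ω : Type*} [MeasurableSpace Ω] (P : Measure Ω) [IsProbabilityMeasure P]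
    {n : ℕ} (U : Fin n → Ω → ℝ) (hU : ∀ i, IsUniform01 P (U i))
    (hind : iIndepFun U P) :
    Measure.map (fun ω i => U i ω) P
      = Measure.pi (fun _ : Fin n => volume.restrict (Set.Ioo (0:ℝ) 1)) := by
  refine (Measure.pi_eq fun s hs => ?_).symm
  rw [Measure.map_apply (measurable_pi_lambda _ fun i => (hU i).1) (MeasurableSet.univ_pi hs)]
  have hpre : (fun ω i => U i ω) ⁻¹' (Set.pi univ s) = ⋂ i ∈ Finset.univ, U i ⁻¹' s i := by
    ext ω; simp [Set.mem_univ_pi]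
  rw [hpre, hind.measure_inter_preimage_eq_mul Finset.univ (fun i _ => hs i)]
  refine Finset.prod_congr rfl fun i _ => ?_
  rw [← Measure.map_apply (hU i).1 (hs i), (hU i).2]


/-- For iid uniform(0,1) random variables `U₁,…,Uₙ` and nonnegative weights summing to 1,
the weighted harmonic mean `(∑ θᵢ/Uᵢ)⁻¹` is first-order stochastically dominated by a
uniform(0,1) variable: `P((∑ θᵢ/Uᵢ)⁻¹ ≤ p) ≥ p` for all `p ∈ (0,1)`. -/
theorem stmt1 {Ω : Type*} [MeasurableSpace Ω] (P : Measure Ω) [IsProbabilityMeasure P]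
    (n : ℕ) (U : Fin n → Ω → ℝ) (hU : ∀ i, IsUniform01 P (U i))
    (hind : iIndepFun U P)
    (θ : Fin n → ℝ) (hθ : ∀ i, 0 ≤ θ i) (hsum : ∑ i, θ i = 1) :
    ∀ p ∈ Set.Ioo (0:ℝ) 1,
      ENNReal.ofReal p ≤ P {ω | (∑ i, θ i * (U i ω)⁻¹)⁻¹ ≤ p} := by
  intro p hp
  obtain ⟨hp0, hp1⟩ := hp
  have ht : 1 ≤ p⁻¹ := (one_le_inv_iff₀).2 ⟨hp0, hp1.le⟩
  have hJmeas : Measurable (fun ω i => U i ω) :=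
    measurable_pi_lambda _ fun i => (hU i).1
  have hTmeas : MeasurableSet {u : Fin n → ℝ | p⁻¹ < ∑ i, θ i * (u i)⁻¹} := by
    apply measurableSet_lt measurable_const
    exact Finset.measurable_sum _ fun i _ => (measurable_pi_apply i).inv.const_mul _
  have hB := lemB n θ hθ hsum p⁻¹ ht
  rw [← map_eq_pi P U hU hind, Measure.map_apply hJmeas hTmeas] at hB
  rw [inv_inv] at hB
  refine le_trans hB (measure_mono ?_)
  intro ω hω
  simp only [mem_preimage, mem_setOf_eq] at hω ⊢
  have hs0 : 0 < ∑ i, θ i * (U i ω)⁻¹ := lt_trans (by positivity) hω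
  calc (∑ i, θ i * (U i ω)⁻¹)⁻¹ ≤ (p⁻¹)⁻¹ := by
        apply inv_anti₀ (by positivity) hω.le
    _ = p := inv_inv p
end

section
/- Let X, X₁, …, Xₙ be iid Pareto(α) random variables with α ∈ (0,1], i.e., ℙ(X > t) = t^{-α} for t ≥ 1, and let (θ₁,…,θₙ) be nonnegative weights summing to 1. Then X ≤_st ∑ᵢ θᵢ Xᵢ, i.e., ℙ(∑ᵢ θᵢ Xᵢ > t) ≥ ℙ(X > t) for all t ∈ ℝ. -/
open MeasureTheory ProbabilityTheory Set

/-- Concave increment lemma for rpow. -/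
lemma rpow_increment {α a b h : ℝ} (hα0 : 0 ≤ α) (hα1 : α ≤ 1)
    (ha : 0 ≤ a) (hab : a ≤ b) (hh : 0 ≤ h) :
    (b + h) ^ α + a ^ α ≤ b ^ α + (a + h) ^ α := by
  have hc := Real.concaveOn_rpow hα0 hα1
  rcases eq_or_lt_of_le (by linarith : a ≤ b + h) with heq | hlt
  · have hb : b = a := by nlinarith
    have hh0 : h = 0 := by linarith
    simp [hb, hh0]
  · set T := b + h - a with hT
    have hT0 : 0 < T := by simp [hT]; linarith
    have hb0 : 0 ≤ b := le_trans ha hab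
    have hbh : (0:ℝ) ≤ b + h := by linarith
    have m1 : ((b - a) / T) • a + (h / T) • (b + h) = a + h := by
      rw [smul_eq_mul, smul_eq_mul, div_mul_eq_mul_div, div_mul_eq_mul_div, ← add_div,
        div_eq_iff hT0.ne', hT]; ring
    have m2 : (h / T) • a + ((b - a) / T) • (b + h) = b := by
      rw [smul_eq_mul, smul_eq_mul, div_mul_eq_mul_div, div_mul_eq_mul_div, ← add_div,
        div_eq_iff hT0.ne', hT]; ring
    have l1 : 0 ≤ h / T := div_nonneg hh hT0.le
    have l2 : 0 ≤ (b - a) / T := div_nonneg (by linarith) hT0.le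
    have ls : h / T + (b - a) / T = 1 := by field_simp; ring
    have ls2 : (b - a) / T + h / T = 1 := by linarith
    have i1 := hc.2 (Set.mem_Ici.2 ha) (Set.mem_Ici.2 hbh) l2 l1 ls2
    have i2 := hc.2 (Set.mem_Ici.2 ha) (Set.mem_Ici.2 hbh) l1 l2 ls
    rw [m1] at i1
    rw [m2] at i2
    simp only [smul_eq_mul] at i1 i2
    have key : (b - a) / T * a ^ α + h / T * (b + h) ^ α
        + (h / T * a ^ α + (b - a) / T * (b + h) ^ α) = a ^ α + (b + h) ^ α := by
      linear_combination (a ^ α) * ls2 + ((b + h) ^ α) * ls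
    linarith

lemma keyB {α u v : ℝ} (hα0 : 0 < α) (hα1 : α ≤ 1) (hu0 : 0 ≤ u) (hu1 : u ≤ 1)
    (hv0 : 0 ≤ v) (hv1 : v ≤ 1) :
    (u + v - u * v) ^ α + (u * v) ^ α ≤ u ^ α + v ^ α := by
  have h := rpow_increment (a := u * v) (b := u) (h := v - u * v) hα0.le hα1
    (by positivity) (mul_le_of_le_one_right hu0 hv1) (by nlinarith)
  have e1 : u + (v - u * v) = u + v - u * v := by ring
  have e2 : u * v + (v - u * v) = v := by ring
  rw [e1, e2] at h
  linarith

lemma keyC {α s x y : ℝ} (hα0 : 0 < α) (hα1 : α ≤ 1) (hs : 0 < s) (hx : 0 ≤ x) (hy : 0 ≤ y) :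
    (1 - (x / (s + x)) ^ α) * (1 - (y / (s + y)) ^ α)
      ≤ 1 - ((x + y) / (s + x + y)) ^ α := by
  set u := x / (s + x) with hu
  set v := y / (s + y) with hv
  set w := (x + y) / (s + x + y) with hw
  have hsx : 0 < s + x := by linarith
  have hsy : 0 < s + y := by linarith
  have hsxy : 0 < s + x + y := by linarith
  have hu0 : 0 ≤ u := by positivity
  have hv0 : 0 ≤ v := by positivity
  have hw0 : 0 ≤ w := by positivity
  have hu1 : u ≤ 1 := by rw [hu, div_le_one hsx]; linarith
  have hv1 : v ≤ 1 := by rw [hv, div_le_one hsy]; linarith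
  have hkey : (u + v - u * v - w) * ((s + x + y) * ((s + x) * (s + y))) = s * (x * y) := by
    rw [hu, hv, hw]
    field_simp
    ring
  have hpos : (0:ℝ) < (s + x + y) * ((s + x) * (s + y)) := by positivity
  have hwle : w ≤ u + v - u * v := by
    nlinarith [mul_nonneg (mul_nonneg hs.le hx) hy]
  have h1 : w ^ α ≤ (u + v - u * v) ^ α := Real.rpow_le_rpow hw0 hwle hα0.le
  have h2 := keyB hα0 hα1 hu0 hu1 hv0 hv1
  have h3 : (u * v) ^ α = u ^ α * v ^ α := Real.mul_rpow hu0 hv0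
  nlinarith

lemma keyD {ι : Type*} (S : Finset ι) (θ : ι → ℝ) (hθ : ∀ i ∈ S, 0 ≤ θ i)
    {s α : ℝ} (hs : 0 < s) (hα0 : 0 < α) (hα1 : α ≤ 1) :
    ∏ i ∈ S, (1 - (θ i / (s + θ i)) ^ α)
      ≤ 1 - ((∑ i ∈ S, θ i) / (s + ∑ i ∈ S, θ i)) ^ α := by
  induction S using Finset.cons_induction with
  | empty => simp [Real.zero_rpow hα0.ne']
  | cons a S ha ih =>
    have hθa : 0 ≤ θ a := hθ a (Finset.mem_cons_self a S)
    have hθS : ∀ i ∈ S, 0 ≤ θ i := fun i hi => hθ i (Finset.mem_cons.2 (Or.inr hi))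
    have hB : 0 ≤ ∑ i ∈ S, θ i := Finset.sum_nonneg hθS
    rw [Finset.prod_cons, Finset.sum_cons]
    have h1 : 1 - (θ a / (s + θ a)) ^ α ≥ 0 := by
      have : θ a / (s + θ a) ≤ 1 := by rw [div_le_one (by linarith)]; linarith
      have := Real.rpow_le_one (by positivity) this hα0.le
      linarith
    calc (1 - (θ a / (s + θ a)) ^ α) * ∏ i ∈ S, (1 - (θ i / (s + θ i)) ^ α)
        ≤ (1 - (θ a / (s + θ a)) ^ α) * (1 - ((∑ i ∈ S, θ i) / (s + ∑ i ∈ S, θ i)) ^ α) :=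
          mul_le_mul_of_nonneg_left (ih hθS) h1
      _ ≤ 1 - ((θ a + ∑ i ∈ S, θ i) / (s + (θ a + ∑ i ∈ S, θ i))) ^ α := by
          have := keyC (x := θ a) (y := ∑ i ∈ S, θ i) hα0 hα1 hs hθa hB
          have e : s + θ a + ∑ i ∈ S, θ i = s + (θ a + ∑ i ∈ S, θ i) := by ring
          rw [e] at this
          exact this

/-- For iid Pareto(α) random variables with `α ∈ (0,1]` and weights in the simplex,
`X ≤_st ∑ θᵢ Xᵢ`: the weighted average dominates a single Pareto loss. -/
theorem stmt2 {Ω : Type*} [MeasurableSpace Ω] (P : Measure Ω) [IsProbabilityMeasure P]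
    (n : ℕ) (α : ℝ) (hα : α ∈ Set.Ioc (0:ℝ) 1)
    (X : Ω → ℝ) (Xs : Fin n → Ω → ℝ)
    (hX : IsPareto P X α) (hXs : ∀ i, IsPareto P (Xs i) α)
    (hind : iIndepFun Xs P)
    (θ : Fin n → ℝ) (hθ : ∀ i, 0 ≤ θ i) (hsum : ∑ i, θ i = 1) :
    ∀ t : ℝ, P {ω | t < X ω} ≤ P {ω | t < ∑ i, θ i * Xs i ω} := by
  obtain ⟨hα0, hα1⟩ := hα
  intro t
  have hXsm : ∀ i, Measurable (Xs i) := fun i => (hXs i).1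
  have hsummeas : Measurable (fun ω => ∑ i, θ i * Xs i ω) :=
    Finset.measurable_sum _ (fun i _ => measurable_const.mul (hXsm i))
  have hmB : MeasurableSet {ω | t < ∑ i, θ i * Xs i ω} :=
    measurableSet_lt measurable_const hsummeas
  -- a.s. all Xᵢ ≥ 1
  have hae1 : ∀ᵐ ω ∂P, ∀ i, 1 ≤ Xs i ω := by
    rw [ae_all_iff]
    intro i
    rw [ae_iff]
    have hm : MeasurableSet {ω | 1 ≤ Xs i ω} :=
      measurableSet_le measurable_const (hXsm i)
    have : {ω | ¬ 1 ≤ Xs i ω} = {ω | 1 ≤ Xs i ω}ᶜ := rfl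
    rw [this, prob_compl_eq_zero_iff hm]
    exact (hXs i).2.1
  obtain ⟨j, hj⟩ : ∃ j, 0 < θ j := by
    by_contra h
    push_neg at h
    have hz : ∀ i, θ i = 0 := fun i => le_antisymm (h i) (hθ i)
    simp [hz] at hsum
  have haegt : ∀ᵐ ω ∂P, 1 < Xs j ω := by
    rw [ae_iff]
    have hm : MeasurableSet {ω | 1 < Xs j ω} :=
      measurableSet_lt measurable_const (hXsm j)
    have : {ω | ¬ 1 < Xs j ω} = {ω | 1 < Xs j ω}ᶜ := rfl
    rw [this, prob_compl_eq_zero_iff hm, (hXs j).2.2 1 le_rfl]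
    simp
  have haesum : ∀ᵐ ω ∂P, 1 < ∑ i, θ i * Xs i ω := by
    filter_upwards [hae1, haegt] with ω h1 hgt
    have h2 : θ j * (Xs j ω - 1) ≤ ∑ i, θ i * (Xs i ω - 1) :=
      Finset.single_le_sum (f := fun i => θ i * (Xs i ω - 1))
        (fun i _ => mul_nonneg (hθ i) (by linarith [h1 i])) (Finset.mem_univ j)
    have h3 : ∑ i, θ i * (Xs i ω - 1) = (∑ i, θ i * Xs i ω) - 1 := by
      simp [mul_sub, Finset.sum_sub_distrib, hsum]
    nlinarith [mul_pos hj (by linarith : (0:ℝ) < Xs j ω - 1)]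
  by_cases ht : 1 < t
  · -- main case
    set s' : ℝ := t - 1 with hs'def
    have hs' : 0 < s' := by simp [hs'def]; linarith
    classical
    set S : Finset (Fin n) := Finset.univ.filter (fun i => 0 < θ i) with hSdef
    set c : Fin n → ℝ := fun i => (t - 1) / θ i + 1 with hcdef
    have hcS : ∀ i ∈ S, 1 ≤ c i := by
      intro i hi
      have hθi : 0 < θ i := (Finset.mem_filter.1 hi).2
      have : 0 ≤ (t - 1) / θ i := div_nonneg (by linarith) hθi.le
      simp [hcdef]; linarith
    have hcpos : ∀ i ∈ S, 0 < c i := fun i hi => lt_of_lt_of_le one_pos (hcS i hi)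
    -- the inclusion
    have hincl : {ω | t < ∑ i, θ i * Xs i ω}ᶜ ≤ᵐ[P] ⋂ i ∈ S, {ω | Xs i ω ≤ c i} := by
      filter_upwards [hae1] with ω h1
      intro hω
      have hle : ∑ i, θ i * Xs i ω ≤ t := not_lt.1 hω
      refine Set.mem_iInter₂.2 fun i hi => ?_
      have hθi : 0 < θ i := (Finset.mem_filter.1 hi).2
      by_contra hc2
      simp only [Set.mem_setOf_eq] at hc2
      push_neg at hc2
      have h2 : θ i * (Xs i ω - 1) ≤ ∑ k, θ k * (Xs k ω - 1) :=
        Finset.single_le_sum (f := fun k => θ k * (Xs k ω - 1))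
          (fun k _ => mul_nonneg (hθ k) (by linarith [h1 k])) (Finset.mem_univ i)
      have h3 : ∑ k, θ k * (Xs k ω - 1) = (∑ k, θ k * Xs k ω) - 1 := by
        simp [mul_sub, Finset.sum_sub_distrib, hsum]
      have h4 : θ i * (c i - 1) = t - 1 := by
        simp only [hcdef]
        field_simp
        ring
      nlinarith [mul_lt_mul_of_pos_left hc2 hθi]
    -- independence: P(E) = ∏
    have hE : P (⋂ i ∈ S, {ω | Xs i ω ≤ c i}) = ∏ i ∈ S, P {ω | Xs i ω ≤ c i} :=
      hind.meas_biInter (fun i _ => ⟨Set.Iic (c i), measurableSet_Iic, rfl⟩)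
    have hPi : ∀ i ∈ S, P {ω | Xs i ω ≤ c i} = ENNReal.ofReal (1 - c i ^ (-α)) := by
      intro i hi
      have hc1 : 1 ≤ c i := hcS i hi
      have hset : {ω | Xs i ω ≤ c i} = {ω | c i < Xs i ω}ᶜ := by
        ext ω; simp [not_lt]
      have hm : MeasurableSet {ω | c i < Xs i ω} :=
        measurableSet_lt measurable_const (hXsm i)
      rw [hset, prob_compl_eq_one_sub hm, (hXs i).2.2 (c i) hc1]
      rw [← ENNReal.ofReal_one, ← ENNReal.ofReal_sub 1 (Real.rpow_nonneg (by linarith) _)]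
    have hnonneg : ∀ i ∈ S, 0 ≤ 1 - c i ^ (-α) := by
      intro i hi
      have := Real.rpow_le_one_of_one_le_of_nonpos (hcS i hi) (by linarith : -α ≤ 0)
      linarith
    have hPE : P (⋂ i ∈ S, {ω | Xs i ω ≤ c i})
        = ENNReal.ofReal (∏ i ∈ S, (1 - c i ^ (-α))) := by
      rw [hE, ENNReal.ofReal_prod_of_nonneg hnonneg]
      exact Finset.prod_congr rfl hPi
    -- analytic bound
    have hrw : ∀ i ∈ S, 1 - c i ^ (-α) = 1 - (θ i / (s' + θ i)) ^ α := by
      intro i hi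
      have hθi : 0 < θ i := (Finset.mem_filter.1 hi).2
      have hci : c i = (s' + θ i) / θ i := by
        simp only [hcdef, hs'def]
        field_simp
      have h1 : θ i / (s' + θ i) = (c i)⁻¹ := by rw [hci, inv_div]
      rw [h1, Real.inv_rpow (hcpos i hi).le, ← Real.rpow_neg (hcpos i hi).le]
    have hsumS : ∑ i ∈ S, θ i = 1 := by
      rw [hSdef, Finset.sum_filter_of_ne (fun i _ hne => lt_of_le_of_ne (hθ i) (Ne.symm hne))]
      exact hsum
    have hanalytic : ∏ i ∈ S, (1 - c i ^ (-α)) ≤ 1 - t ^ (-α) := by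
      have hkd := keyD S θ (fun i hi => (hθ i)) hs' hα0 hα1
      rw [hsumS] at hkd
      have h2 : (1 / (s' + 1)) ^ α = t ^ (-α) := by
        have : s' + 1 = t := by simp [hs'def]
        rw [this, one_div, Real.inv_rpow (by linarith : (0:ℝ) ≤ t),
          ← Real.rpow_neg (by linarith : (0:ℝ) ≤ t)]
      rw [h2] at hkd
      calc ∏ i ∈ S, (1 - c i ^ (-α)) = ∏ i ∈ S, (1 - (θ i / (s' + θ i)) ^ α) :=
            Finset.prod_congr rfl hrw
        _ ≤ 1 - t ^ (-α) := hkd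
    -- put everything together in ENNReal
    have ht0 : (0:ℝ) ≤ t ^ (-α) := Real.rpow_nonneg (by linarith) _
    have ht1 : t ^ (-α) ≤ 1 := Real.rpow_le_one_of_one_le_of_nonpos ht.le (by linarith)
    rw [hX.2.2 t ht.le]
    have step1 : P {ω | t < ∑ i, θ i * Xs i ω}ᶜ
        ≤ ENNReal.ofReal (∏ i ∈ S, (1 - c i ^ (-α))) := by
      rw [← hPE]; exact measure_mono_ae hincl
    have step2 : P {ω | t < ∑ i, θ i * Xs i ω}
        = 1 - P {ω | t < ∑ i, θ i * Xs i ω}ᶜ := by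
      rw [prob_compl_eq_one_sub hmB,
        ENNReal.sub_sub_cancel ENNReal.one_ne_top prob_le_one]
    rw [step2]
    calc ENNReal.ofReal (t ^ (-α))
        = 1 - ENNReal.ofReal (1 - t ^ (-α)) := by
          rw [← ENNReal.ofReal_one, ← ENNReal.ofReal_sub 1 (by linarith)]
          norm_num
      _ ≤ 1 - ENNReal.ofReal (∏ i ∈ S, (1 - c i ^ (-α))) :=
          tsub_le_tsub_left (ENNReal.ofReal_le_ofReal hanalytic) 1
      _ ≤ 1 - P {ω | t < ∑ i, θ i * Xs i ω}ᶜ := tsub_le_tsub_left step1 1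
  · -- easy case t ≤ 1
    push_neg at ht
    have h1 : P {ω | t < ∑ i, θ i * Xs i ω} = 1 := by
      rw [← prob_compl_eq_zero_iff hmB]
      have : {ω | t < ∑ i, θ i * Xs i ω}ᶜ = {ω | ¬ t < ∑ i, θ i * Xs i ω} := rfl
      rw [this, ← ae_iff]
      filter_upwards [haesum] with ω hω
      linarith
    rw [h1]
    exact prob_le_one
end

section
/- Let X₁, …, Xₙ be iid Pareto(α) random variables with α ∈ (0,1], and let (θ₁,…,θₙ) be nonnegative weights summing to 1 with at least two of the θᵢ strictly positive. Then for every t > 1, ℙ(∑ᵢ θᵢ Xᵢ > t) > ℙ(X₁ > t) = t^{-α}; i.e., the stochastic dominance of the weighted average over a single Pareto loss is strict on (1,∞). -/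
open MeasureTheory ProbabilityTheory Set


/-- Two-point majorization for concave rpow. -/
lemma two_point_maj {α : ℝ} (h0 : 0 ≤ α) (h1 : α ≤ 1) {s t : ℝ}
    (hs0 : 0 < s) (hs1 : s < 1) (ht0 : 0 < t) (ht1 : t < 1) :
    (s + t - s * t) ^ α + (s * t) ^ α ≤ s ^ α + t ^ α := by
  have hc := Real.concaveOn_rpow h0 h1
  set x' : ℝ := s * t with hx'
  set y' : ℝ := s + t - s * t with hy'
  have hd : 0 < y' - x' := by nlinarith
  set l : ℝ := (y' - s) / (y' - x') with hl
  have hl0 : 0 ≤ l := div_nonneg (by nlinarith) hd.le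
  have hl1 : l ≤ 1 := by
    rw [div_le_one hd]; nlinarith
  have hx0 : x' ∈ Set.Ici (0:ℝ) := by simp [hx']; positivity
  have hy0 : y' ∈ Set.Ici (0:ℝ) := by simp [hy']; nlinarith
  have e1 : l * x' + (1 - l) * y' = s := by
    rw [hl, div_mul_eq_mul_div, one_sub_div hd.ne', div_mul_eq_mul_div, ← add_div,
      div_eq_iff hd.ne']; ring
  have hxy : x' + y' = s + t := by rw [hx', hy']; ring
  have e2 : (1 - l) * x' + l * y' = t := by nlinarith [e1, hxy]
  have c1 : l * x' ^ α + (1 - l) * y' ^ α ≤ s ^ α := by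
    simpa [smul_eq_mul, e1] using hc.2 hx0 hy0 hl0 (show (0:ℝ) ≤ 1 - l by linarith) (by ring)
  have c2 : (1 - l) * x' ^ α + l * y' ^ α ≤ t ^ α := by
    simpa [smul_eq_mul, e2] using hc.2 hx0 hy0 (show (0:ℝ) ≤ 1 - l by linarith) hl0 (by ring)
  nlinarith [c1, c2]

/-- Key pairwise submultiplicativity. -/
lemma keyK {α u a b : ℝ} (hα0 : 0 < α) (hα1 : α ≤ 1) (hu : 0 < u)
    (ha : 0 < a) (hb : 0 < b) :
    (1 - (1 + u / a) ^ (-α)) * (1 - (1 + u / b) ^ (-α)) <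
      1 - (1 + u / (a + b)) ^ (-α) := by
  set s : ℝ := a / (a + u) with hs
  set t : ℝ := b / (b + u) with ht
  set c : ℝ := (a + b) / (a + b + u) with hc
  have hau : 0 < a + u := by linarith
  have hbu : 0 < b + u := by linarith
  have habu : 0 < a + b + u := by linarith
  have hs0 : 0 < s := by positivity
  have ht0 : 0 < t := by positivity
  have hc0 : 0 < c := by positivity
  have hs1 : s < 1 := by rw [hs, div_lt_one hau]; linarith
  have ht1 : t < 1 := by rw [ht, div_lt_one hbu]; linarith
  have ea : (1 + u / a) ^ (-α) = s ^ α := by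
    rw [show (1 : ℝ) + u / a = ((a + u) / a) by field_simp,
      Real.rpow_neg (by positivity), ← Real.inv_rpow (by positivity), inv_div, hs]
  have eb : (1 + u / b) ^ (-α) = t ^ α := by
    rw [show (1 : ℝ) + u / b = ((b + u) / b) by field_simp,
      Real.rpow_neg (by positivity), ← Real.inv_rpow (by positivity), inv_div, ht]
  have ec : (1 + u / (a + b)) ^ (-α) = c ^ α := by
    rw [show (1 : ℝ) + u / (a + b) = ((a + b + u) / (a + b)) by field_simp,
      Real.rpow_neg (by positivity), ← Real.inv_rpow (by positivity), inv_div, hc]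
  rw [ea, eb, ec]
  have hclt : c < s + t - s * t := by
    have key : s + t - s * t - c = u * a * b / ((a + u) * (b + u) * (a + b + u)) := by
      rw [hs, ht, hc]; field_simp; ring
    nlinarith [div_pos (by positivity : (0:ℝ) < u * a * b)
      (by positivity : (0:ℝ) < (a + u) * (b + u) * (a + b + u)), key]
  have h1 : c ^ α < (s + t - s * t) ^ α := Real.rpow_lt_rpow hc0.le hclt hα0
  have h2 := two_point_maj hα0.le hα1 hs0 hs1 ht0 ht1
  have h3 : (s * t) ^ α = s ^ α * t ^ α := Real.mul_rpow hs0.le ht0.le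
  nlinarith [h1, h2, h3]

lemma Q_nonneg {α u a : ℝ} (hα0 : 0 < α) (hu : 0 < u) (ha : 0 < a) :
    0 ≤ 1 - (1 + u / a) ^ (-α) := by
  have : (1 + u / a) ^ (-α) ≤ 1 :=
    Real.rpow_le_one_of_one_le_of_nonpos
      (by have h : 0 < u / a := by positivity
          linarith)
      (by linarith)
  linarith

lemma prod_Q_le {ι : Type*} {α u : ℝ} (hα0 : 0 < α) (hα1 : α ≤ 1) (hu : 0 < u)
    (s : Finset ι) (hne : s.Nonempty) (θ : ι → ℝ) (hpos : ∀ i ∈ s, 0 < θ i) :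
    ∏ i ∈ s, (1 - (1 + u / θ i) ^ (-α)) ≤ 1 - (1 + u / ∑ i ∈ s, θ i) ^ (-α) := by
  classical
  induction hne using Finset.Nonempty.cons_induction with
  | singleton i => simp
  | cons i s hi hne ih =>
    have hθi : 0 < θ i := hpos i (Finset.mem_cons_self i s)
    have hpos' : ∀ j ∈ s, 0 < θ j := fun j hj => hpos j (Finset.mem_cons.2 (Or.inr hj))
    have hsumpos : 0 < ∑ j ∈ s, θ j :=
      Finset.sum_pos hpos' hne
    rw [Finset.prod_cons, Finset.sum_cons]
    calc (1 - (1 + u / θ i) ^ (-α)) * ∏ j ∈ s, (1 - (1 + u / θ j) ^ (-α))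
        ≤ (1 - (1 + u / θ i) ^ (-α)) * (1 - (1 + u / ∑ j ∈ s, θ j) ^ (-α)) := by
          exact mul_le_mul_of_nonneg_left (ih hpos') (Q_nonneg hα0 hu hθi)
      _ ≤ 1 - (1 + u / (θ i + ∑ j ∈ s, θ j)) ^ (-α) :=
          (keyK hα0 hα1 hu hθi hsumpos).le

lemma prod_Q_lt {ι : Type*} {α u : ℝ} (hα0 : 0 < α) (hα1 : α ≤ 1) (hu : 0 < u)
    (s : Finset ι) (θ : ι → ℝ) (hpos : ∀ i ∈ s, 0 < θ i) (hcard : 2 ≤ s.card) :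
    ∏ i ∈ s, (1 - (1 + u / θ i) ^ (-α)) < 1 - (1 + u / ∑ i ∈ s, θ i) ^ (-α) := by
  classical
  obtain ⟨i, hi⟩ : s.Nonempty := Finset.card_pos.1 (by omega)
  have hs' : (s.erase i).Nonempty := by
    rw [← Finset.card_pos, Finset.card_erase_of_mem hi]; omega
  have hθi : 0 < θ i := hpos i hi
  have hpos' : ∀ j ∈ s.erase i, 0 < θ j := fun j hj => hpos j (Finset.mem_of_mem_erase hj)
  have hsumpos : 0 < ∑ j ∈ s.erase i, θ j := Finset.sum_pos hpos' hs'
  calc ∏ j ∈ s, (1 - (1 + u / θ j) ^ (-α))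
      = (1 - (1 + u / θ i) ^ (-α)) * ∏ j ∈ s.erase i, (1 - (1 + u / θ j) ^ (-α)) :=
        (Finset.mul_prod_erase s _ hi).symm
    _ ≤ (1 - (1 + u / θ i) ^ (-α)) * (1 - (1 + u / ∑ j ∈ s.erase i, θ j) ^ (-α)) :=
        mul_le_mul_of_nonneg_left (prod_Q_le hα0 hα1 hu _ hs' θ hpos') (Q_nonneg hα0 hu hθi)
    _ < 1 - (1 + u / (θ i + ∑ j ∈ s.erase i, θ j)) ^ (-α) := keyK hα0 hα1 hu hθi hsumpos
    _ = 1 - (1 + u / ∑ j ∈ s, θ j) ^ (-α) := by rw [Finset.add_sum_erase s θ hi]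

/-- Strictness: for iid Pareto(α), `α ∈ (0,1]`, weights in the simplex with at least two
strictly positive components, `P(∑ θᵢ Xᵢ > t) > t^{-α} = P(X₁ > t)` for every `t > 1`. -/
theorem stmt3 {Ω : Type*} [MeasurableSpace Ω] (P : Measure Ω) [IsProbabilityMeasure P]
    (n : ℕ) (α : ℝ) (hα : α ∈ Set.Ioc (0:ℝ) 1)
    (X : Fin n → Ω → ℝ) (hX : ∀ i, IsPareto P (X i) α)
    (hind : iIndepFun X P)
    (θ : Fin n → ℝ) (hθ : ∀ i, 0 ≤ θ i) (hsum : ∑ i, θ i = 1)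
    (htwo : ∃ i j, i ≠ j ∧ 0 < θ i ∧ 0 < θ j) :
    ∀ t : ℝ, 1 < t →
      ENNReal.ofReal (t ^ (-α)) < P {ω | t < ∑ i, θ i * X i ω} := by
  classical
  obtain ⟨hα0, hα1⟩ := hα
  intro t ht
  set u : ℝ := t - 1 with hu_def
  have hu : 0 < u := by simp [hu_def]; linarith
  set s : Finset (Fin n) := Finset.univ.filter (fun i => 0 < θ i) with hs
  have hmem : ∀ i, i ∈ s ↔ 0 < θ i := by
    intro i; simp [hs]
  have hsum_s : ∑ i ∈ s, θ i = 1 := by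
    rw [← hsum]
    exact Finset.sum_filter_of_ne (fun i _ hne => (hθ i).lt_of_ne (Ne.symm hne))
  have hcard : 2 ≤ s.card := by
    obtain ⟨i, j, hij, hi, hj⟩ := htwo
    exact Finset.one_lt_card.2 ⟨i, (hmem i).2 hi, j, (hmem j).2 hj, hij⟩
  set A : Fin n → Set Ω := fun i => X i ⁻¹' Set.Ioi (1 + u / θ i) with hA
  have hAmeas : ∀ i, MeasurableSet (A i) := fun i => (hX i).1 measurableSet_Ioi
  have hone_le : ∀ i ∈ s, (1:ℝ) ≤ 1 + u / θ i := by
    intro i hi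
    have h1 : 0 < u / θ i := div_pos hu ((hmem i).1 hi)
    linarith
  have hPA : ∀ i ∈ s, P (A i) = ENNReal.ofReal ((1 + u / θ i) ^ (-α)) := by
    intro i hi
    exact (hX i).2.2 _ (hone_le i hi)
  have hprodnn : ∀ i ∈ s, (0:ℝ) ≤ 1 - (1 + u / θ i) ^ (-α) :=
    fun i hi => Q_nonneg hα0 hu ((hmem i).1 hi)
  have hPAc : ∀ i ∈ s, P ((A i)ᶜ) = ENNReal.ofReal (1 - (1 + u / θ i) ^ (-α)) := by
    intro i hi
    rw [prob_compl_eq_one_sub (hAmeas i), hPA i hi, ← ENNReal.ofReal_one,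
      ← ENNReal.ofReal_sub _ (Real.rpow_nonneg (by linarith [hone_le i hi]) _)]
  have hAc : ∀ i, (A i)ᶜ = X i ⁻¹' Set.Iic (1 + u / θ i) := by
    intro i
    rw [hA, ← Set.preimage_compl, Set.compl_Ioi]
  have hInter : P (⋂ i ∈ s, (A i)ᶜ) = ∏ i ∈ s, P ((A i)ᶜ) := by
    have h := hind.measure_inter_preimage_eq_mul s
      (sets := fun i => Set.Iic (1 + u / θ i)) (fun i _ => measurableSet_Iic)
    simp only [← hAc] at h
    exact h
  have hIunionMeas : MeasurableSet (⋃ i ∈ s, A i) :=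
    MeasurableSet.biUnion s.countable_toSet (fun i _ => hAmeas i)
  have hInterMeas : MeasurableSet (⋂ i ∈ s, (A i)ᶜ) :=
    MeasurableSet.biInter s.countable_toSet (fun i _ => (hAmeas i).compl)
  have hUnion : P (⋃ i ∈ s, A i)
      = 1 - ENNReal.ofReal (∏ i ∈ s, (1 - (1 + u / θ i) ^ (-α))) := by
    rw [show (⋃ i ∈ s, A i) = (⋂ i ∈ s, (A i)ᶜ)ᶜ by simp [Set.compl_iInter],
      prob_compl_eq_one_sub hInterMeas, hInter,
      Finset.prod_congr rfl hPAc, ← ENNReal.ofReal_prod_of_nonneg hprodnn]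
  have hE : P (⋃ k, {ω | X k ω < 1}) = 0 := by
    refine measure_iUnion_null fun k => ?_
    have h1 := (hX k).2.1
    have hms : MeasurableSet {ω | 1 ≤ X k ω} := (hX k).1 measurableSet_Ici
    have hcompl : {ω | X k ω < 1} = {ω | 1 ≤ X k ω}ᶜ := by
      ext ω; simp [not_le]
    rw [hcompl, prob_compl_eq_one_sub hms, h1, tsub_self]
  have hsubset : (⋃ i ∈ s, A i) ⊆
      {ω | t < ∑ i, θ i * X i ω} ∪ (⋃ k, {ω | X k ω < 1}) := by
    intro ω hω
    by_cases hgood : ∀ k, 1 ≤ X k ω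
    · left
      obtain ⟨i, hi, hAi⟩ := Set.mem_iUnion₂.1 hω
      have hθi : 0 < θ i := (hmem i).1 hi
      have hXi : 1 + u / θ i < X i ω := hAi
      show t < ∑ k, θ k * X k ω
      have split : θ i * X i ω + ∑ k ∈ Finset.univ.erase i, θ k * X k ω
          = ∑ k, θ k * X k ω :=
        Finset.add_sum_erase _ (fun k => θ k * X k ω) (Finset.mem_univ i)
      have hrest : ∑ k ∈ Finset.univ.erase i, θ k
          ≤ ∑ k ∈ Finset.univ.erase i, θ k * X k ω :=
        Finset.sum_le_sum (fun k _ => le_mul_of_one_le_right (hθ k) (hgood k))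
      have hsum_erase : θ i + ∑ k ∈ Finset.univ.erase i, θ k = 1 := by
        rw [Finset.add_sum_erase _ _ (Finset.mem_univ i)]; exact hsum
      have hmul : θ i * (1 + u / θ i) < θ i * X i ω :=
        mul_lt_mul_of_pos_left hXi hθi
      have hval : θ i * (1 + u / θ i) = θ i + u := by field_simp
      have hut : t = 1 + u := by rw [hu_def]; ring
      linarith
    · right
      push_neg at hgood
      obtain ⟨k, hk⟩ := hgood
      exact Set.mem_iUnion.2 ⟨k, by simpa [not_le] using hk⟩
  have hle : P (⋃ i ∈ s, A i) ≤ P {ω | t < ∑ i, θ i * X i ω} := by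
    calc P (⋃ i ∈ s, A i)
        ≤ P ({ω | t < ∑ i, θ i * X i ω} ∪ (⋃ k, {ω | X k ω < 1})) :=
          measure_mono hsubset
      _ ≤ P {ω | t < ∑ i, θ i * X i ω} + P (⋃ k, {ω | X k ω < 1}) :=
          measure_union_le _ _
      _ = P {ω | t < ∑ i, θ i * X i ω} := by rw [hE, add_zero]
  have hkey : ∏ i ∈ s, (1 - (1 + u / θ i) ^ (-α)) < 1 - t ^ (-α) := by
    have h := prod_Q_lt hα0 hα1 hu s θ (fun i hi => (hmem i).1 hi) hcard
    rwa [hsum_s, div_one, show (1:ℝ) + u = t by rw [hu_def]; ring] at h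
  have hQpos : (0:ℝ) < t ^ (-α) := Real.rpow_pos_of_pos (by linarith) _
  have hprodnn' : (0:ℝ) ≤ ∏ i ∈ s, (1 - (1 + u / θ i) ^ (-α)) :=
    Finset.prod_nonneg hprodnn
  calc ENNReal.ofReal (t ^ (-α))
      < ENNReal.ofReal (1 - ∏ i ∈ s, (1 - (1 + u / θ i) ^ (-α))) := by
        rw [ENNReal.ofReal_lt_ofReal_iff (by linarith)]
        linarith
    _ = 1 - ENNReal.ofReal (∏ i ∈ s, (1 - (1 + u / θ i) ^ (-α))) := by
        rw [ENNReal.ofReal_sub _ hprodnn', ENNReal.ofReal_one]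
    _ = P (⋃ i ∈ s, A i) := hUnion.symm
    _ ≤ P {ω | t < ∑ i, θ i * X i ω} := hle
end

section
/- Let X, X₁, …, X_{mn} be iid Pareto(α) random variables with α ∈ (0,1] and m, n positive integers. Then (1/m)·∑_{i=1}^{m} Xᵢ ≤_st (1/(mn))·∑_{i=1}^{mn} Xᵢ; i.e., the equally weighted average of mn iid ultra heavy-tailed Pareto losses first-order stochastically dominates the equally weighted average of m of them. -/
open MeasureTheory ProbabilityTheory Set

lemma core2 (ν₁ ν₂ : Measure ℝ) [IsProbabilityMeasure ν₁] [IsProbabilityMeasure ν₂]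
    (h₁ : ∀ s : ℝ, ENNReal.ofReal (max s 1)⁻¹ ≤ ν₁ (Ioi s))
    (h₂ : ∀ s : ℝ, ENNReal.ofReal (max s 1)⁻¹ ≤ ν₂ (Ioi s))
    (l r : ℝ) (hl : 0 < l) (hr : 0 < r) (hlr : l + r = 1) (t : ℝ) :
    ENNReal.ofReal (max t 1)⁻¹ ≤ (ν₁.prod ν₂) {p : ℝ × ℝ | t < l * p.1 + r * p.2} := by
  have tail1 : ∀ (ν : Measure ℝ) [IsProbabilityMeasure ν],
      (∀ s : ℝ, ENNReal.ofReal (max s 1)⁻¹ ≤ ν (Ioi s)) → ν (Ioi 1) = 1 := by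
    intro ν _ h
    refine le_antisymm prob_le_one ?_
    simpa using h 1
  rcases le_or_gt t 1 with ht | ht
  · -- easy case
    rw [max_eq_right ht]
    have hsub : Ioi (1:ℝ) ×ˢ Ioi (1:ℝ) ⊆ {p : ℝ × ℝ | t < l * p.1 + r * p.2} := by
      rintro ⟨x, y⟩ ⟨hx, hy⟩
      simp only [mem_Ioi] at hx hy
      simp only [Set.mem_setOf_eq]
      nlinarith
    calc ENNReal.ofReal (1:ℝ)⁻¹ ≤ 1 := by simp
      _ = (ν₁.prod ν₂) (Ioi (1:ℝ) ×ˢ Ioi (1:ℝ)) := by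
          rw [Measure.prod_prod, tail1 ν₁ h₁, tail1 ν₂ h₂, one_mul]
      _ ≤ _ := measure_mono hsub
  · -- main case
    rw [max_eq_left ht.le]
    have hmeas : MeasurableSet {p : ℝ × ℝ | t < l * p.1 + r * p.2} := by
      have : Measurable fun p : ℝ × ℝ => l * p.1 + r * p.2 :=
        (measurable_fst.const_mul l).add (measurable_snd.const_mul r)
      exact measurableSet_lt measurable_const this
    rw [Measure.prod_apply hmeas]
    set f : ℝ → ℝ := fun x => (max ((t - l * x) / r) 1)⁻¹ with hf
    have hfm : Measurable f :=
      (((measurable_const.sub (measurable_id.const_mul l)).div_const r).max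
        measurable_const).inv
    have hf_nn : ∀ x, 0 ≤ f x := by
      intro x
      have : (0:ℝ) < max ((t - l * x) / r) 1 := lt_of_lt_of_le one_pos (le_max_right _ _)
      positivity
    have step1 : ∫⁻ x, ENNReal.ofReal (f x) ∂ν₁ ≤
        ∫⁻ x, ν₂ (Prod.mk x ⁻¹' {p : ℝ × ℝ | t < l * p.1 + r * p.2}) ∂ν₁ := by
      refine lintegral_mono fun x => ?_
      have hset : Prod.mk x ⁻¹' {p : ℝ × ℝ | t < l * p.1 + r * p.2}
          = Ioi ((t - l * x) / r) := by
        ext y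
        simp only [mem_preimage, Set.mem_setOf_eq, mem_Ioi]
        rw [div_lt_iff₀ hr]
        constructor <;> intro h <;> nlinarith
      rw [hset, hf]
      exact h₂ _
    refine le_trans ?_ step1
    rw [lintegral_eq_lintegral_meas_lt ν₁ (Filter.Eventually.of_forall hf_nn) hfm.aemeasurable]
    obtain ⟨u₀, hu₀⟩ : ∃ x : ℝ, x = r / (t - l) := ⟨_, rfl⟩
    have htl : 0 < t - l := by nlinarith
    have hu₀pos : 0 < u₀ := hu₀ ▸ div_pos hr htl
    have hu₀lt : u₀ < 1 := by
      rw [hu₀, div_lt_one htl]; nlinarith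
    have hu₀tl : u₀ * (t - l) = r := by rw [hu₀]; field_simp
    have key1 : ∀ u ∈ Ioc (0:ℝ) u₀, (1:ENNReal) ≤ ν₁ {x : ℝ | u < f x} := by
      rintro u ⟨hu0, huu⟩
      have hsub : Ioi (1:ℝ) ⊆ {x : ℝ | u < f x} := by
        intro x hx
        simp only [mem_Ioi] at hx
        simp only [Set.mem_setOf_eq, hf]
        have hu1 : u < 1 := lt_of_le_of_lt huu hu₀lt
        rcases le_or_gt ((t - l * x) / r) 1 with hc | hc
        · rw [max_eq_right hc]; simpa using hu1
        · rw [max_eq_left hc.le, inv_div]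
          have hpos : 0 < t - l * x := by
            have h0 : (0:ℝ) < (t - l * x) / r := lt_trans one_pos hc
            have := mul_pos h0 hr
            rwa [div_mul_cancel₀ _ (ne_of_gt hr)] at this
          have h1 : r / (t - l) < r / (t - l * x) :=
            div_lt_div_of_pos_left hr hpos (by nlinarith)
          calc u ≤ u₀ := huu
            _ < r / (t - l * x) := by rw [hu₀]; exact h1
      calc (1:ENNReal) = ν₁ (Ioi 1) := (tail1 ν₁ h₁).symm
        _ ≤ _ := measure_mono hsub
    have key2 : ∀ u ∈ Ioo u₀ (1:ℝ), ENNReal.ofReal (l / t) ≤ ν₁ {x : ℝ | u < f x} := by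
      rintro u ⟨hu0, hu1⟩
      have hu0u : 0 < u := lt_trans hu₀pos hu0
      have hune : u ≠ 0 := ne_of_gt hu0u
      have hru : r / u < t - l := by
        rw [div_lt_iff₀ hu0u]
        calc r = u₀ * (t - l) := hu₀tl.symm
          _ < u * (t - l) := mul_lt_mul_of_pos_right hu0 htl
          _ = (t - l) * u := mul_comm _ _
      obtain ⟨d, hd⟩ : ∃ x : ℝ, x = (t - r / u) / l := ⟨_, rfl⟩
      have hd1 : 1 < d := by
        rw [hd, lt_div_iff₀ hl]; nlinarith
      have hld : l * d = t - r / u := by rw [hd]; field_simp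
      have hsub : Ioi d ⊆ {x : ℝ | u < f x} := by
        intro x hx
        simp only [mem_Ioi] at hx
        simp only [Set.mem_setOf_eq, hf]
        have hxc : t - l * x < r / u := by nlinarith [mul_lt_mul_of_pos_left hx hl]
        rcases le_or_gt ((t - l * x) / r) 1 with hc | hc
        · rw [max_eq_right hc]; simpa using hu1
        · rw [max_eq_left hc.le, inv_div]
          have hpos : 0 < t - l * x := by
            have h0 : (0:ℝ) < (t - l * x) / r := lt_trans one_pos hc
            have := mul_pos h0 hr
            rwa [div_mul_cancel₀ _ (ne_of_gt hr)] at this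
          rw [lt_div_iff₀ hpos]
          have : u * (r / u) = r := by field_simp
          nlinarith [mul_lt_mul_of_pos_left hxc hu0u]
      refine le_trans ?_ (le_trans (h₁ d) (measure_mono hsub))
      rw [max_eq_left hd1.le]
      apply ENNReal.ofReal_le_ofReal
      rw [hd, inv_div]
      have hrupos : 0 < r / u := div_pos hr hu0u
      gcongr
      · nlinarith
      · nlinarith
    -- final computation
    have hanti : Antitone fun u : ℝ => ν₁ {x : ℝ | u < f x} := by
      intro a b hab
      exact measure_mono fun x hx => lt_of_le_of_lt hab hx
    have hdisj : Disjoint (Ioc (0:ℝ) u₀) (Ioo u₀ 1) := by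
      rw [Set.disjoint_left]
      rintro a ⟨_, ha2⟩ ⟨ha3, _⟩
      exact absurd ha3 (not_lt.mpr ha2)
    have hsubset : Ioc (0:ℝ) u₀ ∪ Ioo u₀ 1 ⊆ Ioi (0:ℝ) := by
      rintro u (⟨h, _⟩ | ⟨h, _⟩)
      · exact h
      · exact lt_trans hu₀pos h
    calc ENNReal.ofReal t⁻¹
        ≤ 1 * volume (Ioc (0:ℝ) u₀) + ENNReal.ofReal (l / t) * volume (Ioo u₀ (1:ℝ)) := by
          rw [Real.volume_Ioc, Real.volume_Ioo, one_mul, sub_zero,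
            ← ENNReal.ofReal_mul (by positivity), ← ENNReal.ofReal_add hu₀pos.le
            (mul_nonneg (by positivity) (by linarith))]
          apply ENNReal.ofReal_le_ofReal
          have ht0 : (0:ℝ) < t := by linarith
          rw [inv_eq_one_div, div_le_iff₀ ht0]
          field_simp
          nlinarith [hu₀tl]
      _ = (∫⁻ _ in Ioc (0:ℝ) u₀, (1:ENNReal)) + ∫⁻ _ in Ioo u₀ (1:ℝ), ENNReal.ofReal (l / t) := by
          rw [setLIntegral_const, setLIntegral_const]
      _ ≤ (∫⁻ u in Ioc (0:ℝ) u₀, ν₁ {x : ℝ | u < f x}) +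
          ∫⁻ u in Ioo u₀ (1:ℝ), ν₁ {x : ℝ | u < f x} :=
          add_le_add (setLIntegral_mono hanti.measurable key1)
            (setLIntegral_mono hanti.measurable key2)
      _ = ∫⁻ u in Ioc (0:ℝ) u₀ ∪ Ioo u₀ 1, ν₁ {x : ℝ | u < f x} :=
          (lintegral_union measurableSet_Ioo hdisj).symm
      _ ≤ ∫⁻ u in Ioi (0:ℝ), ν₁ {x : ℝ | u < f x} :=
          lintegral_mono' (Measure.restrict_mono hsubset le_rfl) le_rfl

lemma tail_map {Ω : Type*} [MeasurableSpace Ω] (P : Measure Ω) (U : Ω → ℝ)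
    (hU : Measurable U) (s : ℝ) : P.map U (Ioi s) = P {ω | s < U ω} := by
  rw [Measure.map_apply hU measurableSet_Ioi]
  rfl

lemma core2' {Ω : Type*} [MeasurableSpace Ω] (P : Measure Ω) [IsProbabilityMeasure P]
    (U V : Ω → ℝ) (hU : Measurable U) (hV : Measurable V) (hUV : IndepFun U V P)
    (hU' : ∀ s : ℝ, ENNReal.ofReal (max s 1)⁻¹ ≤ P {ω | s < U ω})
    (hV' : ∀ s : ℝ, ENNReal.ofReal (max s 1)⁻¹ ≤ P {ω | s < V ω})
    (l r : ℝ) (hl : 0 < l) (hr : 0 < r) (hlr : l + r = 1) (t : ℝ) :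
    ENNReal.ofReal (max t 1)⁻¹ ≤ P {ω | t < l * U ω + r * V ω} := by
  haveI : IsProbabilityMeasure (P.map U) := Measure.isProbabilityMeasure_map hU.aemeasurable
  haveI : IsProbabilityMeasure (P.map V) := Measure.isProbabilityMeasure_map hV.aemeasurable
  have hmap := (indepFun_iff_map_prod_eq_prod_map_map hU.aemeasurable hV.aemeasurable).mp hUV
  have hmeasS : MeasurableSet {p : ℝ × ℝ | t < l * p.1 + r * p.2} :=
    measurableSet_lt measurable_const
      ((measurable_fst.const_mul l).add (measurable_snd.const_mul r))
  have h1 : P {ω | t < l * U ω + r * V ω}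
      = P.map (fun ω => (U ω, V ω)) {p : ℝ × ℝ | t < l * p.1 + r * p.2} := by
    rw [Measure.map_apply (hU.prodMk hV) hmeasS]
    rfl
  rw [h1, hmap]
  exact core2 _ _ (fun s => by rw [tail_map P U hU]; exact hU' s)
    (fun s => by rw [tail_map P V hV]; exact hV' s) l r hl hr hlr t

lemma repl {Ω : Type*} [MeasurableSpace Ω] (P : Measure Ω) [IsProbabilityMeasure P]
    (U₁ U₂ R : Ω → ℝ) (hU₁ : Measurable U₁) (hU₂ : Measurable U₂) (hR : Measurable R)
    (h₁ : IndepFun R U₁ P) (h₂ : IndepFun R U₂ P)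
    (hT : ∀ w : ℝ, P {ω | w < U₁ ω} ≤ P {ω | w < U₂ ω}) (s : ℝ) :
    P {ω | s < U₁ ω + R ω} ≤ P {ω | s < U₂ ω + R ω} := by
  haveI : IsProbabilityMeasure (P.map R) := Measure.isProbabilityMeasure_map hR.aemeasurable
  have key : ∀ (U : Ω → ℝ), Measurable U → IndepFun R U P →
      P {ω | s < U ω + R ω} = ∫⁻ x, (P.map U) (Ioi (s - x)) ∂(P.map R) := by
    intro U hU hRU
    haveI : IsProbabilityMeasure (P.map U) := Measure.isProbabilityMeasure_map hU.aemeasurable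
    have hmap := (indepFun_iff_map_prod_eq_prod_map_map hR.aemeasurable hU.aemeasurable).mp hRU
    have hmeasS : MeasurableSet {p : ℝ × ℝ | s < p.1 + p.2} :=
      measurableSet_lt measurable_const (measurable_fst.add measurable_snd)
    have h1 : P {ω | s < U ω + R ω}
        = P.map (fun ω => (R ω, U ω)) {p : ℝ × ℝ | s < p.1 + p.2} := by
      rw [Measure.map_apply (hR.prodMk hU) hmeasS]
      congr 1
      ext ω
      simp [add_comm]
    rw [h1, hmap, Measure.prod_apply hmeasS]
    refine lintegral_congr fun x => ?_
    congr 1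
    ext y
    simp only [mem_preimage, Set.mem_setOf_eq, mem_Ioi]
    constructor <;> intro hh <;> linarith
  rw [key U₁ hU₁ h₁, key U₂ hU₂ h₂]
  refine lintegral_mono fun x => ?_
  rw [tail_map P U₁ hU₁, tail_map P U₂ hU₂]
  exact hT _

lemma indep_wsum {Ω : Type*} [MeasurableSpace Ω] {P : Measure Ω} (X : ℕ → Ω → ℝ)
    (hXm : ∀ i, Measurable (X i)) (hind : iIndepFun X P)
    (S T : Finset ℕ) (hST : Disjoint S T) (a b : ℕ → ℝ) :
    IndepFun (fun ω => ∑ i ∈ S, a i * X i ω) (fun ω => ∑ i ∈ T, b i * X i ω) P := by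
  have hφ : ∀ (U : Finset ℕ) (c : ℕ → ℝ),
      Measurable (fun v : {x // x ∈ U} → ℝ => ∑ i : {x // x ∈ U}, c i.1 * v i) :=
    fun U c => Finset.measurable_sum _ (fun i _ => (measurable_pi_apply i).const_mul _)
  have key : ∀ (U : Finset ℕ) (c : ℕ → ℝ),
      ((fun v : {x // x ∈ U} → ℝ => ∑ i : {x // x ∈ U}, c i.1 * v i)
        ∘ (fun ω (i : {x // x ∈ U}) => X i ω)) = fun ω => ∑ i ∈ U, c i * X i ω := by
    intro U c
    funext ω
    simp only [Function.comp_apply]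
    rw [← Finset.sum_coe_sort U (fun i => c i * X i ω)]
  have h := ((hind.indepFun_finset S T hST hXm).comp (hφ S a) (hφ T b))
  rwa [key S a, key T b] at h

lemma avg_tail {Ω : Type*} [MeasurableSpace Ω] (P : Measure Ω) [IsProbabilityMeasure P]
    (Z : ℕ → Ω → ℝ) (hZm : ∀ i, Measurable (Z i))
    (hind : iIndepFun Z P)
    (htail : ∀ (i : ℕ) (s : ℝ), ENNReal.ofReal (max s 1)⁻¹ ≤ P {ω | s < Z i ω})
    {s : Finset ℕ} (hs : s.Nonempty) :
    ∀ w : ℝ, ENNReal.ofReal (max w 1)⁻¹ ≤ P {ω | w < (∑ i ∈ s, Z i ω) / (s.card : ℝ)} := by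
  induction hs using Finset.Nonempty.cons_induction with
  | singleton a =>
    intro w
    simpa using htail a w
  | cons a s h hs IH =>
    intro w
    have hk : (0:ℝ) < s.card := by
      exact_mod_cast Finset.card_pos.mpr hs
    have hk1 : (0:ℝ) < (s.card : ℝ) + 1 := by linarith
    have hcard : (((Finset.cons a s h).card : ℕ) : ℝ) = (s.card : ℝ) + 1 := by
      rw [Finset.card_cons]
      push_cast
      ring
    have hU : Measurable fun ω => (∑ i ∈ s, Z i ω) / (s.card : ℝ) :=
      (Finset.measurable_sum s fun i _ => hZm i).div_const _
    have hind2 : IndepFun (fun ω => (∑ i ∈ s, Z i ω) / (s.card : ℝ)) (Z a) P := by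
      have h1 : IndepFun (fun ω => ∑ i ∈ s, (1:ℝ) * Z i ω)
          (fun ω => ∑ i ∈ ({a} : Finset ℕ), (1:ℝ) * Z i ω) P :=
        indep_wsum Z hZm hind s {a} (by simpa using h) _ _
      simp only [one_mul, Finset.sum_singleton] at h1
      exact h1.comp (measurable_id.div_const ((s.card : ℝ))) measurable_id
    have hpt : ∀ ω, ((s.card : ℝ) / ((s.card : ℝ) + 1)) * ((∑ i ∈ s, Z i ω) / (s.card : ℝ))
        + (1 / ((s.card : ℝ) + 1)) * Z a ω
        = (∑ i ∈ Finset.cons a s h, Z i ω) / (((Finset.cons a s h).card : ℕ) : ℝ) := by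
      intro ω
      rw [Finset.sum_cons, hcard]
      field_simp
      ring
    have hset : {ω | w < (∑ i ∈ Finset.cons a s h, Z i ω) / (((Finset.cons a s h).card : ℕ) : ℝ)}
        = {ω | w < ((s.card : ℝ) / ((s.card : ℝ) + 1)) * ((∑ i ∈ s, Z i ω) / (s.card : ℝ))
            + (1 / ((s.card : ℝ) + 1)) * Z a ω} := by
      ext ω
      simp only [Set.mem_setOf_eq, hpt ω]
    rw [hset]
    exact core2' P _ (Z a) hU (hZm a) hind2 IH (htail a)
      _ _ (div_pos hk hk1) (div_pos one_pos hk1) (by field_simp) w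

lemma pareto_ae_one_le {Ω : Type*} [MeasurableSpace Ω] (P : Measure Ω) [IsProbabilityMeasure P]
    {X : Ω → ℝ} {α : ℝ} (hX : IsPareto P X α) : ∀ᵐ ω ∂P, 1 ≤ X ω := by
  have hm : MeasurableSet {ω | 1 ≤ X ω} := measurableSet_le measurable_const hX.1
  rw [ae_iff]
  have : {ω | ¬ 1 ≤ X ω} = {ω | 1 ≤ X ω}ᶜ := rfl
  rw [this, prob_compl_eq_zero_iff₀ hm.nullMeasurableSet]
  exact hX.2.1

lemma pareto_avg_tail {Ω : Type*} [MeasurableSpace Ω] (P : Measure Ω) [IsProbabilityMeasure P]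
    (α : ℝ) (hα : α ∈ Set.Ioc (0:ℝ) 1)
    (X : ℕ → Ω → ℝ) (hX : ∀ i, IsPareto P (X i) α)
    (hind : iIndepFun X P)
    {s : Finset ℕ} (hs : s.Nonempty) (w : ℝ) :
    ENNReal.ofReal ((max w 1) ^ (-α)) ≤ P {ω | w < (∑ i ∈ s, X i ω) / (s.card : ℝ)} := by
  obtain ⟨hα0, hα1⟩ := hα
  have hXm : ∀ i, Measurable (X i) := fun i => (hX i).1
  -- the transformed Pareto(1) variables
  set g : ℝ → ℝ := fun x => (max x 1) ^ α with hg
  have hgc : Continuous g :=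
    (continuous_id.max continuous_const).rpow_const (fun x => Or.inr hα0.le)
  set Z : ℕ → Ω → ℝ := fun i => g ∘ X i with hZ
  have hZm : ∀ i, Measurable (Z i) := fun i => hgc.measurable.comp (hXm i)
  have hindZ : iIndepFun Z P :=
    hind.comp (fun _ => g) (fun _ => hgc.measurable)
  have hZ1 : ∀ i ω, 1 ≤ Z i ω := fun i ω =>
    Real.one_le_rpow (le_max_right _ _) hα0.le
  have hZeq : ∀ i ω, 1 ≤ X i ω → Z i ω = X i ω ^ α := by
    intro i ω h
    simp only [hZ, hg, Function.comp_apply, max_eq_left h]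
  have htailZ : ∀ (i : ℕ) (u : ℝ), ENNReal.ofReal (max u 1)⁻¹ ≤ P {ω | u < Z i ω} := by
    intro i u
    rcases lt_or_ge u 1 with hu | hu
    · rw [max_eq_right hu.le]
      have : {ω | u < Z i ω} = univ := by
        ext ω
        simpa using lt_of_lt_of_le hu (hZ1 i ω)
      rw [this]
      simp
    · rw [max_eq_left hu]
      have hu0 : (0:ℝ) ≤ u := le_trans zero_le_one hu
      have hset : {ω | u < Z i ω} = {ω | u ^ α⁻¹ < X i ω} := by
        ext ω
        simp only [Set.mem_setOf_eq, hZ, hg, Function.comp_apply]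
        have hmax0 : (0:ℝ) ≤ max (X i ω) 1 := le_trans zero_le_one (le_max_right _ _)
        rw [← Real.rpow_inv_lt_iff_of_pos hu0 hmax0 hα0]
        have h1u : (1:ℝ) ≤ u ^ α⁻¹ := Real.one_le_rpow hu (by positivity)
        constructor
        · intro h
          rcases lt_max_iff.mp h with h' | h'
          · exact h'
          · linarith
        · intro h
          exact lt_max_iff.mpr (Or.inl h)
      rw [hset, (hX i).2.2 _ (Real.one_le_rpow hu (by positivity))]
      have hpow : (u ^ α⁻¹) ^ (-α) = u⁻¹ := by
        rw [← Real.rpow_mul hu0, show α⁻¹ * -α = -1 by field_simp, Real.rpow_neg_one]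
      rw [hpow]
  have hZavg := avg_tail P Z hZm hindZ htailZ hs
  have hk : (0:ℝ) < s.card := by exact_mod_cast Finset.card_pos.mpr hs
  have hGae : ∀ᵐ ω ∂P, ∀ i ∈ s, 1 ≤ X i ω :=
    (ae_ball_iff s.countable_toSet).mpr fun i _ => pareto_ae_one_le P (hX i)
  rcases lt_or_ge w 1 with hw | hw
  · rw [max_eq_right hw.le, Real.one_rpow, ENNReal.ofReal_one]
    have hsub : ∀ᵐ ω ∂P, ω ∈ {ω | w < (∑ i ∈ s, X i ω) / (s.card : ℝ)} := by
      filter_upwards [hGae] with ω hω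
      have hsum : (s.card : ℝ) ≤ ∑ i ∈ s, X i ω := by
        calc (s.card : ℝ) = ∑ _i ∈ s, (1:ℝ) := by simp
          _ ≤ _ := Finset.sum_le_sum hω
      have h1 : (1:ℝ) ≤ (∑ i ∈ s, X i ω) / s.card := by
        rw [le_div_iff₀ hk]; linarith
      show w < (∑ i ∈ s, X i ω) / (s.card : ℝ)
      linarith
    calc (1:ENNReal) = P univ := measure_univ.symm
      _ ≤ P _ := measure_mono_ae (hsub.mono fun ω h _ => h)
  · -- 1 ≤ w
    rw [max_eq_left hw]
    have hw0 : (0:ℝ) ≤ w := le_trans zero_le_one hw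
    have h1α : (1:ℝ) ≤ α⁻¹ := by
      have h := mul_inv_cancel₀ (ne_of_gt hα0)
      have hinv : (0:ℝ) < α⁻¹ := by positivity
      nlinarith
    have key : ∀ᵐ ω ∂P, w ^ α < (∑ i ∈ s, Z i ω) / (s.card : ℝ) →
        w < (∑ i ∈ s, X i ω) / (s.card : ℝ) := by
      filter_upwards [hGae] with ω hω hlt
      have hZX : ∀ i ∈ s, Z i ω ^ α⁻¹ = X i ω := by
        intro i hi
        rw [hZeq i ω (hω i hi), ← Real.rpow_mul (le_trans zero_le_one (hω i hi)),
          mul_inv_cancel₀ (ne_of_gt hα0), Real.rpow_one]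
      have hmem : ∀ i ∈ s, Z i ω ∈ Ici (0:ℝ) := fun i hi => le_trans zero_le_one (hZ1 i ω)
      have hjensen := (convexOn_rpow h1α).map_sum_le (t := s)
          (w := fun _ => (s.card : ℝ)⁻¹) (p := fun i => Z i ω)
          (fun i _ => by positivity) (by rw [Finset.sum_const, nsmul_eq_mul]; exact mul_inv_cancel₀ hk.ne') hmem
      simp only [smul_eq_mul] at hjensen
      have e1 : ∑ i ∈ s, (s.card : ℝ)⁻¹ * Z i ω = (∑ i ∈ s, Z i ω) / s.card := by
        rw [← Finset.mul_sum]; ring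
      have e2 : ∑ i ∈ s, (s.card : ℝ)⁻¹ * Z i ω ^ α⁻¹ = (∑ i ∈ s, X i ω) / s.card := by
        rw [Finset.sum_congr rfl (fun i hi => by rw [hZX i hi]), ← Finset.mul_sum]; ring
      rw [e1, e2] at hjensen
      have h3 : (w ^ α) ^ α⁻¹ < ((∑ i ∈ s, Z i ω) / s.card) ^ α⁻¹ :=
        Real.rpow_lt_rpow (by positivity) hlt (by positivity)
      have h4 : (w ^ α) ^ α⁻¹ = w := by
        rw [← Real.rpow_mul hw0, mul_inv_cancel₀ (ne_of_gt hα0), Real.rpow_one]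
      linarith
    have hmono : P {ω | w ^ α < (∑ i ∈ s, Z i ω) / (s.card : ℝ)}
        ≤ P {ω | w < (∑ i ∈ s, X i ω) / (s.card : ℝ)} :=
      measure_mono_ae (key.mono fun ω h => h)
    calc ENNReal.ofReal (w ^ (-α)) = ENNReal.ofReal ((w ^ α)⁻¹) := by rw [Real.rpow_neg hw0]
      _ = ENNReal.ofReal (max (w ^ α) 1)⁻¹ := by
          rw [max_eq_left (Real.one_le_rpow hw hα0.le)]
      _ ≤ P {ω | w ^ α < (∑ i ∈ s, Z i ω) / (s.card : ℝ)} := hZavg _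
      _ ≤ _ := hmono

/-- For iid Pareto(α), `α ∈ (0,1]`, and positive integers `m, n`, the average of `m`
of the losses is first-order stochastically dominated by the average of `mn` of them. -/
theorem stmt5 {Ω : Type*} [MeasurableSpace Ω] (P : Measure Ω) [IsProbabilityMeasure P]
    (α : ℝ) (hα : α ∈ Set.Ioc (0:ℝ) 1) (m n : ℕ) (hm : 0 < m) (hn : 0 < n)
    (X : ℕ → Ω → ℝ) (hX : ∀ i, IsPareto P (X i) α)
    (hind : iIndepFun X P) :
    ∀ t : ℝ, P {ω | t < (∑ i ∈ Finset.range m, X i ω) / (m : ℝ)}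
      ≤ P {ω | t < (∑ i ∈ Finset.range (m * n), X i ω) / ((m : ℝ) * (n : ℝ))} := by
  intro t
  classical
  have hXm : ∀ i, Measurable (X i) := fun i => (hX i).1
  have hmR : (0:ℝ) < m := by exact_mod_cast hm
  have hnR : (0:ℝ) < n := by exact_mod_cast hn
  -- block j : indices j*n, ..., j*n + n - 1
  set blk : ℕ → Finset ℕ := fun j => (Finset.range n).image (fun i => j * n + i) with hblk
  have hblk_mem : ∀ j x, x ∈ blk j ↔ ∃ i < n, x = j * n + i := by
    intro j x
    simp only [hblk, Finset.mem_image, Finset.mem_range]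
    constructor
    · rintro ⟨i, hi, rfl⟩; exact ⟨i, hi, rfl⟩
    · rintro ⟨i, hi, rfl⟩; exact ⟨i, hi, rfl⟩
  have hblk_lb : ∀ j x, x ∈ blk j → j * n ≤ x ∧ x < (j + 1) * n := by
    intro j x hx
    obtain ⟨i, hi, rfl⟩ := (hblk_mem j x).mp hx
    constructor
    · exact Nat.le_add_right _ _
    · calc j * n + i < j * n + n := by omega
        _ = (j + 1) * n := by ring
  set B : ℕ → Ω → ℝ := fun j ω => (∑ i ∈ Finset.range n, X (j * n + i) ω) / (n : ℝ) with hB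
  set H : ℕ → Ω → ℝ := fun k ω =>
    (∑ j ∈ Finset.range k, X j ω) + ∑ j ∈ Finset.Ico k m, B j ω with hH
  have hBm : ∀ j, Measurable (B j) :=
    fun j => (Finset.measurable_sum _ fun i _ => hXm _).div_const _
  -- step inequality
  have step : ∀ k, k < m → ∀ s : ℝ,
      P {ω | s < H (k + 1) ω} ≤ P {ω | s < H k ω} := by
    intro k hk s
    set R : Ω → ℝ := fun ω =>
      (∑ j ∈ Finset.range k, X j ω) + ∑ j ∈ Finset.Ico (k + 1) m, B j ω with hR
    have hRm : Measurable R :=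
      (Finset.measurable_sum _ fun i _ => hXm _).add
        (Finset.measurable_sum _ fun j _ => hBm j)
    have hHk1 : ∀ ω, H (k + 1) ω = X k ω + R ω := by
      intro ω
      simp only [hH, hR, Finset.sum_range_succ]
      ring
    have hHk : ∀ ω, H k ω = B k ω + R ω := by
      intro ω
      simp only [hH, hR, Finset.sum_eq_sum_Ico_succ_bot hk (fun j => B j ω)]
      ring
    -- weighted-sum representation of R
    set T : Finset ℕ := Finset.range k ∪ (Finset.Ico (k + 1) m).biUnion blk with hT
    set c : ℕ → ℝ := fun i => if i < k then 1 else (n : ℝ)⁻¹ with hc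
    have hT_lb : ∀ x ∈ T, x < k ∨ (k + 1) * n ≤ x := by
      intro x hx
      rw [hT, Finset.mem_union] at hx
      rcases hx with hx | hx
      · exact Or.inl (Finset.mem_range.mp hx)
      · right
        obtain ⟨j, hj, hxj⟩ := Finset.mem_biUnion.mp hx
        have := (hblk_lb j x hxj).1
        have hj1 := (Finset.mem_Ico.mp hj).1
        calc (k + 1) * n ≤ j * n := Nat.mul_le_mul_right n hj1
          _ ≤ x := this
    have hdisj_blocks : ∀ j1 ∈ Finset.Ico (k+1) m, ∀ j2 ∈ Finset.Ico (k+1) m, j1 ≠ j2 →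
        Disjoint (blk j1) (blk j2) := by
      intro j1 _ j2 _ hne
      rw [Finset.disjoint_left]
      intro x hx1 hx2
      have h1 := hblk_lb j1 x hx1
      have h2 := hblk_lb j2 x hx2
      rcases Nat.lt_or_ge j1 j2 with h | h
      · have : (j1 + 1) * n ≤ j2 * n := Nat.mul_le_mul_right n h
        omega
      · rcases Nat.lt_or_ge j2 j1 with h' | h'
        · have : (j2 + 1) * n ≤ j1 * n := Nat.mul_le_mul_right n h'
          omega
        · exact hne (Nat.le_antisymm h' h)
    have hRrep : R = fun ω => ∑ i ∈ T, c i * X i ω := by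
      funext ω
      rw [hT]
      rw [Finset.sum_union (by
        rw [Finset.disjoint_left]
        intro x hx1 hx2
        have hxk := Finset.mem_range.mp hx1
        obtain ⟨j, hj, hxj⟩ := Finset.mem_biUnion.mp hx2
        have := (hblk_lb j x hxj).1
        have hj1 := (Finset.mem_Ico.mp hj).1
        have : (k+1) * n ≤ x := le_trans (Nat.mul_le_mul_right n hj1) this
        have : k + 1 ≤ (k+1) * n := Nat.le_mul_of_pos_right _ hn
        omega)]
      rw [Finset.sum_biUnion hdisj_blocks]
      simp only [hR]
      congr 1
      · apply Finset.sum_congr rfl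
        intro i hi
        rw [hc]
        simp [if_pos (Finset.mem_range.mp hi)]
      · apply Finset.sum_congr rfl
        intro j hj
        have hj1 := (Finset.mem_Ico.mp hj).1
        simp only [hB, hblk]
        rw [Finset.sum_image (fun a _ b _ h => Nat.add_left_cancel h),
          div_eq_inv_mul, Finset.mul_sum]
        apply Finset.sum_congr rfl
        intro i hi
        rw [hc]
        have : ¬ (j * n + i < k) := by
          have h1 : k + 1 ≤ (k+1) * n := Nat.le_mul_of_pos_right _ hn
          have h2 : (k+1) * n ≤ j * n := Nat.mul_le_mul_right n hj1
          omega
        simp [if_neg this]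
    -- independence
    have hsing : ∀ ω, X k ω = ∑ i ∈ ({k} : Finset ℕ), (1:ℝ) * X i ω := by
      intro ω; simp
    have hblkrep : ∀ ω, B k ω = ∑ i ∈ blk k, (n : ℝ)⁻¹ * X i ω := by
      intro ω
      simp only [hB, hblk]
      rw [Finset.sum_image (fun a _ b _ h => Nat.add_left_cancel h), div_eq_inv_mul, Finset.mul_sum]
    have hdisj1 : Disjoint ({k} : Finset ℕ) T := by
      rw [Finset.disjoint_left]
      intro x hx
      intro hxT
      rw [Finset.mem_singleton] at hx
      rcases hT_lb _ hxT with h | h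
      · omega
      · have h2 : k + 1 ≤ (k+1) * n := Nat.le_mul_of_pos_right _ hn
        omega
    have hdisj2 : Disjoint (blk k) T := by
      rw [Finset.disjoint_left]
      intro x hx hxT
      have hxb := hblk_lb k x hx
      rcases hT_lb _ hxT with h | h
      · have : k ≤ k * n := Nat.le_mul_of_pos_right _ hn
        omega
      · exact absurd h (not_le.mpr hxb.2)
    have hindep1 : IndepFun R (X k) P := by
      have h := (indep_wsum X hXm hind ({k} : Finset ℕ) T hdisj1
        (fun _ => (1:ℝ)) c).symm
      rw [hRrep]
      convert h using 2
      exact hsing _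
    have hindep2 : IndepFun R (B k) P := by
      have h := (indep_wsum X hXm hind (blk k) T hdisj2
        (fun _ => (n : ℝ)⁻¹) c).symm
      rw [hRrep]
      convert h using 2
      exact hblkrep _
    -- tail comparison
    have hblk_card : ((blk k).card : ℝ) = (n : ℝ) := by
      rw [hblk, Finset.card_image_of_injective _ (fun a b h => Nat.add_left_cancel h)]
      simp
    have hblk_ne : (blk k).Nonempty := by
      rw [hblk]
      exact Finset.Nonempty.image ⟨0, Finset.mem_range.mpr hn⟩ _
    have hT : ∀ w : ℝ, P {ω | w < X k ω} ≤ P {ω | w < B k ω} := by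
      intro w
      have upper : P {ω | w < X k ω} ≤ ENNReal.ofReal ((max w 1) ^ (-α)) := by
        rcases le_or_gt 1 w with hw | hw
        · rw [max_eq_left hw, ((hX k).2.2 w hw)]
        · rw [max_eq_right hw.le, Real.one_rpow, ENNReal.ofReal_one]
          exact prob_le_one
      have lower := pareto_avg_tail P α hα X hX hind hblk_ne w
      refine le_trans upper (le_trans lower (le_of_eq ?_))
      congr 1
      ext ω
      simp only [Set.mem_setOf_eq]
      rw [hblk_card]
      constructor
      · intro h
        rw [hB]
        rw [hblk, Finset.sum_image (fun a _ b _ hh => Nat.add_left_cancel hh)] at h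
        exact h
      · intro h
        rw [hblk, Finset.sum_image (fun a _ b _ hh => Nat.add_left_cancel hh)]
        rw [hB] at h
        exact h
    have hfin := repl P (X k) (B k) R (hXm k) (hBm k) hRm hindep1 hindep2 hT s
    have e1 : {ω | s < H (k+1) ω} = {ω | s < X k ω + R ω} := by
      ext ω; rw [Set.mem_setOf_eq, Set.mem_setOf_eq, hHk1 ω]
    have e2 : {ω | s < H k ω} = {ω | s < B k ω + R ω} := by
      ext ω; rw [Set.mem_setOf_eq, Set.mem_setOf_eq, hHk ω]
    rw [e1, e2]
    exact hfin
  -- chain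
  have chain : ∀ (f : ℕ → ENNReal) (N : ℕ), (∀ k, k < N → f (k+1) ≤ f k) → f N ≤ f 0 := by
    intro f N
    induction N with
    | zero => intro _; exact le_refl _
    | succ N ih =>
      intro h
      exact le_trans (h N (Nat.lt_succ_self N))
        (ih fun k hk => h k (hk.trans (Nat.lt_succ_self N)))
  have hchain := chain (fun k => P {ω | t * m < H k ω}) m
    (fun k hk => step k hk (t * m))
  -- identify endpoints
  have hsplit : ∀ (M : ℕ) ω, ∑ i ∈ Finset.range (M * n), X i ω
      = ∑ j ∈ Finset.range M, ∑ i ∈ Finset.range n, X (j * n + i) ω := by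
    intro M ω
    induction M with
    | zero => simp
    | succ M ih =>
      rw [Finset.sum_range_succ, ← ih, show (M+1) * n = M * n + n by ring,
        Finset.sum_range_add]
  have hHm : ∀ ω, H m ω = ∑ j ∈ Finset.range m, X j ω := by
    intro ω
    simp [hH]
  have hH0 : ∀ ω, H 0 ω = (∑ i ∈ Finset.range (m * n), X i ω) / (n : ℝ) := by
    intro ω
    simp only [hH, Finset.range_zero, Finset.sum_empty, zero_add]
    rw [← Finset.range_eq_Ico, hsplit m ω, Finset.sum_div]
  have e1 : {ω | t < (∑ i ∈ Finset.range m, X i ω) / (m : ℝ)}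
      = {ω | t * m < H m ω} := by
    ext ω
    rw [Set.mem_setOf_eq, Set.mem_setOf_eq, hHm ω, lt_div_iff₀ hmR]
  have e2 : {ω | t < (∑ i ∈ Finset.range (m * n), X i ω) / ((m : ℝ) * (n : ℝ))}
      = {ω | t * m < H 0 ω} := by
    ext ω
    rw [Set.mem_setOf_eq, Set.mem_setOf_eq, hH0 ω, lt_div_iff₀ hnR,
      lt_div_iff₀ (mul_pos hmR hnR)]
    constructor <;> intro h <;> nlinarith
  rw [e1, e2]
  exact hchain
end

section
/- Let X₁,…,Xₙ be identically distributed integrable random variables (with arbitrary dependence) and θ₁,…,θₙ > 0 with ∑ᵢθᵢ = 1. If X₁ ≤_st θ₁X₁ + ⋯ + θₙXₙ, then X₁ = X₂ = ⋯ = Xₙ almost surely. -/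
open MeasureTheory ProbabilityTheory Set

noncomputable def myf (x : ℝ) : ℝ := x + Real.sqrt (1 + x ^ 2)

lemma myf_cont : Continuous myf :=
  continuous_id.add (Real.continuous_sqrt.comp (by continuity))

lemma sqrt_gt_abs (x : ℝ) : |x| < Real.sqrt (1 + x ^ 2) := by
  have h : Real.sqrt (x ^ 2) < Real.sqrt (1 + x ^ 2) :=
    Real.sqrt_lt_sqrt (sq_nonneg x) (by linarith)
  simpa [Real.sqrt_sq_eq_abs] using h

lemma myf_pos (x : ℝ) : 0 < myf x := by
  have h := sqrt_gt_abs x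
  have := neg_abs_le x
  unfold myf; linarith

lemma myf_le (x : ℝ) : myf x ≤ 1 + 2 * |x| := by
  have h : Real.sqrt (1 + x ^ 2) ≤ 1 + |x| := by
    rw [show (1 : ℝ) + |x| = Real.sqrt ((1 + |x|) ^ 2) by
      rw [Real.sqrt_sq (by positivity)]]
    apply Real.sqrt_le_sqrt
    have : x ^ 2 = |x| ^ 2 := (sq_abs x).symm
    nlinarith [abs_nonneg x]
  have := le_abs_self x
  unfold myf; linarith

lemma myf_mono : StrictMono myf := by
  intro a b hab
  have hu := sqrt_gt_abs a
  have hv := sqrt_gt_abs b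
  set u := Real.sqrt (1 + a ^ 2) with hu'
  set v := Real.sqrt (1 + b ^ 2) with hv'
  have hu2 : u ^ 2 = 1 + a ^ 2 := Real.sq_sqrt (by positivity)
  have hv2 : v ^ 2 = 1 + b ^ 2 := Real.sq_sqrt (by positivity)
  have h1 : -a < u := lt_of_le_of_lt (neg_le_abs a) hu
  have h2 : -b < v := lt_of_le_of_lt (neg_le_abs b) hv
  have huv : (0:ℝ) < u + v := by linarith [abs_nonneg a, abs_nonneg b]
  show a + u < b + v
  nlinarith [mul_pos (sub_pos.mpr hab) (show (0:ℝ) < u + v + a + b by linarith)]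

lemma myf_sconv : StrictConvexOn ℝ univ myf := by
  refine ⟨convex_univ, fun x _ y _ hxy a b ha hb hab => ?_⟩
  simp only [smul_eq_mul]
  set u := Real.sqrt (1 + x ^ 2) with hu'
  set v := Real.sqrt (1 + y ^ 2) with hv'
  set w := Real.sqrt (1 + (a * x + b * y) ^ 2) with hw'
  have hu2 : u ^ 2 = 1 + x ^ 2 := Real.sq_sqrt (by positivity)
  have hv2 : v ^ 2 = 1 + y ^ 2 := Real.sq_sqrt (by positivity)
  have hw2 : w ^ 2 = 1 + (a * x + b * y) ^ 2 := Real.sq_sqrt (by positivity)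
  have hu0 : 0 < u := Real.sqrt_pos.mpr (by positivity)
  have hv0 : 0 < v := Real.sqrt_pos.mpr (by positivity)
  have hw0 : 0 < w := Real.sqrt_pos.mpr (by positivity)
  have hxy2 : 0 < (x - y) ^ 2 :=
    lt_of_le_of_ne (sq_nonneg _) (Ne.symm (pow_ne_zero 2 (sub_ne_zero.mpr hxy)))
  have hsq : (1 + x * y) ^ 2 < (u * v) ^ 2 := by nlinarith [hxy2, hu2, hv2]
  have key : 1 + x * y < u * v :=
    lt_of_pow_lt_pow_left₀ 2 (mul_pos hu0 hv0).le hsq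
  have h2 : w ^ 2 < (a * u + b * v) ^ 2 := by
    have e1 : a ^ 2 * u ^ 2 = a ^ 2 * (1 + x ^ 2) := by rw [hu2]
    have e2 : b ^ 2 * v ^ 2 = b ^ 2 * (1 + y ^ 2) := by rw [hv2]
    have habsq : (a + b) ^ 2 = 1 := by rw [hab]; ring
    nlinarith [e1, e2, hw2, habsq, mul_pos (mul_pos ha hb) (sub_pos.mpr key)]
  have h3 : w < a * u + b * v :=
    lt_of_pow_lt_pow_left₀ 2 (by positivity) h2
  show a * x + b * y + w < a * (x + u) + b * (y + v)
  nlinarith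

lemma myf_le_iff {t : ℝ} (ht : 0 < t) (y : ℝ) :
    myf y ≤ t ↔ y ≤ (t - t⁻¹) / 2 := by
  have h1 : (1 : ℝ) + ((t - t⁻¹) / 2) ^ 2 = ((t + t⁻¹) / 2) ^ 2 := by
    field_simp; ring
  have hx : myf ((t - t⁻¹) / 2) = t := by
    unfold myf
    rw [h1, Real.sqrt_sq (by positivity)]
    ring
  have h2 := myf_mono.le_iff_le (a := y) (b := (t - t⁻¹) / 2)
  rw [hx] at h2
  exact h2


/-- For identically distributed integrable random variables (arbitrary dependence) and
strictly positive weights summing to 1, if `X₁ ≤_st ∑ θᵢ Xᵢ` then `X₁ = ⋯ = Xₙ` a.s. -/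
theorem stmt6 {Ω : Type*} [MeasurableSpace Ω] (P : Measure Ω) [IsProbabilityMeasure P]
    (n : ℕ) (hn : 2 ≤ n) (X : Fin n → Ω → ℝ)
    (hmeas : ∀ i, Measurable (X i))
    (hint : ∀ i, Integrable (X i) P)
    (hident : ∀ i j, Measure.map (X i) P = Measure.map (X j) P)
    (θ : Fin n → ℝ) (hθ : ∀ i, 0 < θ i) (hsum : ∑ i, θ i = 1)
    (hdom : ∀ x : ℝ, P {ω | ∑ i, θ i * X i ω ≤ x} ≤ P {ω | X ⟨0, by omega⟩ ω ≤ x}) :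
    ∀ i j, X i =ᵐ[P] X j := by
  set i0 : Fin n := ⟨0, by omega⟩ with hi0
  set S := fun ω => ∑ i, θ i * X i ω with hS
  have hSmeas : Measurable S :=
    Finset.measurable_sum _ fun i _ => (hmeas i).const_mul (θ i)
  have hSint : Integrable S P :=
    integrable_finset_sum _ fun i _ => (hint i).const_mul (θ i)
  have hfint : ∀ g : Ω → ℝ, Measurable g → Integrable g P →
      Integrable (fun ω => myf (g ω)) P := by
    intro g hg hgi
    refine Integrable.mono' ((integrable_const (1 : ℝ)).add (hgi.abs.const_mul 2))
      (myf_cont.measurable.comp hg).aestronglyMeasurable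
      (Filter.Eventually.of_forall fun ω => ?_)
    rw [Real.norm_eq_abs, abs_of_pos (myf_pos _)]
    exact myf_le _
  have hint0 : ∀ i, ∫ ω, myf (X i ω) ∂P = ∫ ω, myf (X i0 ω) ∂P := by
    intro i
    calc ∫ ω, myf (X i ω) ∂P = ∫ x, myf x ∂(P.map (X i)) :=
          (integral_map (hmeas i).aemeasurable myf_cont.aestronglyMeasurable).symm
      _ = ∫ x, myf x ∂(P.map (X i0)) := by rw [hident i i0]
      _ = ∫ ω, myf (X i0 ω) ∂P :=
          integral_map (hmeas i0).aemeasurable myf_cont.aestronglyMeasurable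
  have hdom' : ∀ t : ℝ, 0 < t →
      P {ω | t < myf (X i0 ω)} ≤ P {ω | t < myf (S ω)} := by
    intro t ht
    have e1 : {ω | t < myf (X i0 ω)} = {ω | X i0 ω ≤ (t - t⁻¹) / 2}ᶜ := by
      ext ω
      simp only [mem_setOf_eq, mem_compl_iff, not_le, ← myf_le_iff ht, not_le]
    have e2 : {ω | t < myf (S ω)} = {ω | S ω ≤ (t - t⁻¹) / 2}ᶜ := by
      ext ω
      simp only [mem_setOf_eq, mem_compl_iff, not_le, ← myf_le_iff ht, not_le]
    have m1 : MeasurableSet {ω | X i0 ω ≤ (t - t⁻¹) / 2} :=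
      measurableSet_le (hmeas i0) measurable_const
    have m2 : MeasurableSet {ω | S ω ≤ (t - t⁻¹) / 2} :=
      measurableSet_le hSmeas measurable_const
    rw [e1, e2, measure_compl m1 (measure_ne_top _ _),
      measure_compl m2 (measure_ne_top _ _)]
    exact tsub_le_tsub_left (hdom ((t - t⁻¹) / 2)) _
  have n0 : 0 ≤ᵐ[P] fun ω => myf (X i0 ω) :=
    Filter.Eventually.of_forall fun ω => (myf_pos _).le
  have nS : 0 ≤ᵐ[P] fun ω => myf (S ω) :=
    Filter.Eventually.of_forall fun ω => (myf_pos _).le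
  have hle : ∫ ω, myf (X i0 ω) ∂P ≤ ∫ ω, myf (S ω) ∂P := by
    rw [integral_eq_lintegral_of_nonneg_ae n0
        (myf_cont.measurable.comp (hmeas i0)).aestronglyMeasurable,
      integral_eq_lintegral_of_nonneg_ae nS
        (myf_cont.measurable.comp hSmeas).aestronglyMeasurable]
    refine ENNReal.toReal_mono (hfint S hSmeas hSint).lintegral_lt_top.ne ?_
    rw [lintegral_eq_lintegral_meas_lt P n0
        (myf_cont.measurable.comp (hmeas i0)).aemeasurable,
      lintegral_eq_lintegral_meas_lt P nS
        (myf_cont.measurable.comp hSmeas).aemeasurable]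
    refine lintegral_mono_ae ?_
    rw [ae_restrict_iff' measurableSet_Ioi]
    exact Filter.Eventually.of_forall fun t ht => hdom' t ht
  have hGint : Integrable (fun ω => ∑ i, θ i * myf (X i ω)) P :=
    integrable_finset_sum _ fun i _ => ((hfint _ (hmeas i) (hint i)).const_mul (θ i))
  have hsum_eq : ∫ ω, ∑ i, θ i * myf (X i ω) ∂P = ∫ ω, myf (X i0 ω) ∂P := by
    rw [integral_finset_sum _ fun i _ => ((hfint _ (hmeas i) (hint i)).const_mul (θ i))]
    calc ∑ i, ∫ ω, θ i * myf (X i ω) ∂P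
        = ∑ i, θ i * ∫ ω, myf (X i0 ω) ∂P := by
          refine Finset.sum_congr rfl fun i _ => ?_
          rw [integral_const_mul, hint0 i]
      _ = ∫ ω, myf (X i0 ω) ∂P := by rw [← Finset.sum_mul, hsum, one_mul]
  have hJ : ∀ ω, myf (S ω) ≤ ∑ i, θ i * myf (X i ω) := by
    intro ω
    have := (myf_sconv.convexOn).map_sum_le (t := Finset.univ) (w := θ)
      (p := fun i => X i ω) (fun i _ => (hθ i).le) hsum (fun i _ => mem_univ _)
    simpa [smul_eq_mul] using this
  have hg_nonneg : ∀ ω, 0 ≤ (fun ω => ∑ i, θ i * myf (X i ω) - myf (S ω)) ω :=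
    fun ω => sub_nonneg.mpr (hJ ω)
  have hg_int : Integrable (fun ω => ∑ i, θ i * myf (X i ω) - myf (S ω)) P :=
    hGint.sub (hfint S hSmeas hSint)
  have hg_zero : (fun ω => ∑ i, θ i * myf (X i ω) - myf (S ω)) =ᵐ[P] 0 := by
    rw [← integral_eq_zero_iff_of_nonneg hg_nonneg hg_int]
    have h1 : ∫ ω, (∑ i, θ i * myf (X i ω) - myf (S ω)) ∂P
        = ∫ ω, ∑ i, θ i * myf (X i ω) ∂P - ∫ ω, myf (S ω) ∂P :=
      integral_sub hGint (hfint S hSmeas hSint)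
    have h2 : 0 ≤ ∫ ω, (∑ i, θ i * myf (X i ω) - myf (S ω)) ∂P :=
      integral_nonneg hg_nonneg
    rw [h1, hsum_eq] at h2 ⊢
    linarith
  have hae : ∀ᵐ ω ∂P, ∀ i j : Fin n, X i ω = X j ω := by
    filter_upwards [hg_zero] with ω hω i j
    have hω' : ∑ k, θ k * myf (X k ω) - myf (S ω) = 0 := hω
    have heq : ∑ k, θ k • myf (X k ω) ≤ myf (∑ k, θ k • X k ω) := by
      simp only [smul_eq_mul]
      have hSω : S ω = ∑ k, θ k * X k ω := rfl
      linarith [hω', hSω ▸ le_of_eq (rfl : myf (S ω) = myf (S ω))]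
    exact myf_sconv.eq_of_le_map_sum (fun k _ => hθ k) hsum
      (fun k _ => mem_univ _) heq (Finset.mem_univ i) (Finset.mem_univ j)
  intro i j
  filter_upwards [hae] with ω h
  exact h i j
end

section
/- Let X, X₁, …, Xₙ be iid Pareto(α) with α ∈ (0,1], (θ₁,…,θₙ) in the simplex, and m ≥ 1 a real number. Then max(X, m) ≤_st ∑ᵢ θᵢ · max(Xᵢ, m), and (X − m)₊ ≤_st ∑ᵢ θᵢ · (Xᵢ − m)₊. -/
open MeasureTheory ProbabilityTheory Set

/-! ### Auxiliary scalar lemmas -/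

section Scalar
open Real

private lemma key_c {α c : ℝ} (hα0 : 0 < α) (hα1 : α ≤ 1) (hc0 : 0 ≤ c) (hc1 : c ≤ 1) :
    c ^ α + c ^ (1 + α) ≤ (1 - α) + (1 + α) * c := by
  have h1 : c ^ α * (1:ℝ) ^ (1 - α) ≤ α * c + (1 - α) * 1 :=
    Real.geom_mean_le_arith_mean2_weighted hα0.le (by linarith) hc0 zero_le_one (by ring)
  rw [Real.one_rpow, mul_one, mul_one] at h1
  have h2 : c ^ (1 + α) ≤ c := by
    have : c ^ (1 + α) = c ^ (1:ℝ) * c ^ α := Real.rpow_add_of_nonneg hc0 zero_le_one hα0.le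
    rw [this, Real.rpow_one]
    calc c * c ^ α ≤ c * 1 := by
          have := Real.rpow_le_one hc0 hc1 hα0.le
          nlinarith [Real.rpow_nonneg hc0 α]
      _ = c := mul_one c
  linarith

private lemma Dp_nonneg {α v x : ℝ} (hα0 : 0 < α) (hα1 : α ≤ 1) (hv : 0 < v) (hx : 0 < x) :
    2 * x + v ≤ (1 - α) * (x ^ (-α) * (x + v) ^ (1 + α)) + (1 + α) * (x ^ (1 - α) * (x + v) ^ α) := by
  have hxv : 0 < x + v := by linarith
  set A := x ^ α with hA_def
  set B := (x + v) ^ α with hB_def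
  have hA : 0 < A := Real.rpow_pos_of_pos hx α
  have hB : 0 < B := Real.rpow_pos_of_pos hxv α
  have hcpos : 0 < x / (x + v) := div_pos hx hxv
  have hc1 : x / (x + v) ≤ 1 := by rw [div_le_one hxv]; linarith
  have hcα : (x / (x + v)) ^ α = A / B := Real.div_rpow hx.le hxv.le α
  have hc1α : (x / (x + v)) ^ (1 + α) = (x / (x + v)) * (A / B) := by
    rw [Real.rpow_add hcpos, Real.rpow_one, hcα]
  have key : A / B + (x / (x + v)) * (A / B) ≤ (1 - α) + (1 + α) * (x / (x + v)) := by
    have := key_c (c := x / (x + v)) hα0 hα1 hcpos.le hc1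
    rw [hcα, hc1α] at this; exact this
  have main : (2 * x + v) * A ≤ (1 - α) * ((x + v) * B) + (1 + α) * (x * B) := by
    calc (2 * x + v) * A = (A / B + x / (x + v) * (A / B)) * (B * (x + v)) := by
          field_simp; ring
      _ ≤ ((1 - α) + (1 + α) * (x / (x + v))) * (B * (x + v)) :=
          mul_le_mul_of_nonneg_right key (by positivity)
      _ = (1 - α) * ((x + v) * B) + (1 + α) * (x * B) := by field_simp
  have hrw1 : x ^ (-α) = A⁻¹ := Real.rpow_neg hx.le α
  have hrw2 : x ^ (1 - α) = x / A := by rw [Real.rpow_sub hx, Real.rpow_one]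
  have hrw3 : (x + v) ^ (1 + α) = (x + v) * B := by rw [Real.rpow_add hxv, Real.rpow_one]
  rw [hrw1, hrw2, hrw3]
  have hE : (1 - α) * (A⁻¹ * ((x + v) * B)) + (1 + α) * (x / A * B)
      = ((1 - α) * ((x + v) * B) + (1 + α) * (x * B)) / A := by field_simp
  rw [hE, le_div_iff₀ hA]
  linarith [main]

private noncomputable def Dfun (α v : ℝ) : ℝ → ℝ :=
  fun x => x ^ (1 - α) * (x + v) ^ (1 + α) - x * (x + v)

private noncomputable def Ffun (α v : ℝ) : ℝ → ℝ :=
  fun x => Real.log (1 - (x / (x + v)) ^ α)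

private lemma Dfun_hasDeriv {α v x : ℝ} (hx : 0 < x) (hxv : 0 < x + v) :
    HasDerivAt (Dfun α v)
      ((1 - α) * (x ^ (-α) * (x + v) ^ (1 + α)) + (1 + α) * (x ^ (1 - α) * (x + v) ^ α)
        - (2 * x + v)) x := by
  have h1 : HasDerivAt (fun y : ℝ => y ^ (1 - α)) ((1 - α) * x ^ (1 - α - 1)) x :=
    Real.hasDerivAt_rpow_const (Or.inl hx.ne')
  have hadd : HasDerivAt (fun y : ℝ => y + v) 1 x := (hasDerivAt_id x).add_const v
  have h2 : HasDerivAt (fun y : ℝ => (y + v) ^ (1 + α))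
      (1 * (1 + α) * (x + v) ^ (1 + α - 1)) x := hadd.rpow_const (Or.inl hxv.ne')
  have h3 : HasDerivAt (fun y : ℝ => y * (y + v)) (1 * (x + v) + x * 1) x :=
    (hasDerivAt_id x).mul hadd
  have := (h1.mul h2).sub h3
  convert this using 1
  · rfl
  · rfl
  · rfl
  rw [show (1 - α - 1 : ℝ) = -α by ring, show (1 + α - 1 : ℝ) = α by ring]
  ring

private lemma Dfun_eq {α v x : ℝ} (hx : 0 < x) (hxv : 0 < x + v) :
    Dfun α v x = x * (x + v) * ((x + v) ^ α / x ^ α) - x * (x + v) := by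
  have hA : (0:ℝ) < x ^ α := Real.rpow_pos_of_pos hx α
  have h2 : x ^ (1 - α) = x / x ^ α := by rw [Real.rpow_sub hx, Real.rpow_one]
  have h3 : (x + v) ^ (1 + α) = (x + v) * (x + v) ^ α := by
    rw [Real.rpow_add hxv, Real.rpow_one]
  rw [Dfun, h2, h3]
  field_simp

private lemma Dfun_pos {α v x : ℝ} (hα0 : 0 < α) (hv : 0 < v) (hx : 0 < x) : 0 < Dfun α v x := by
  have hxv : 0 < x + v := by linarith
  have hA : (0:ℝ) < x ^ α := Real.rpow_pos_of_pos hx α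
  have hAB : x ^ α < (x + v) ^ α := Real.rpow_lt_rpow hx.le (by linarith) hα0
  rw [Dfun_eq hx hxv]
  have h1 : (1:ℝ) < (x + v) ^ α / x ^ α := (one_lt_div hA).mpr hAB
  nlinarith [mul_pos hx hxv]

private lemma Dfun_mono {α v : ℝ} (hα0 : 0 < α) (hα1 : α ≤ 1) (hv : 0 < v) :
    MonotoneOn (Dfun α v) (Ioi 0) := by
  have hD : ∀ x ∈ interior (Ioi (0:ℝ)), 0 ≤ deriv (Dfun α v) x := by
    intro x hx
    rw [interior_Ioi] at hx
    have hx' : (0:ℝ) < x := hx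
    have hxv : 0 < x + v := by linarith
    rw [(Dfun_hasDeriv hx' hxv).deriv]
    have := Dp_nonneg hα0 hα1 hv hx'
    linarith
  refine monotoneOn_of_deriv_nonneg (convex_Ioi 0) ?_ ?_ hD
  · intro x hx
    have hx' : (0:ℝ) < x := hx
    exact (Dfun_hasDeriv hx' (by linarith)).differentiableAt.continuousAt.continuousWithinAt
  · rw [interior_Ioi]
    intro x hx
    have hx' : (0:ℝ) < x := hx
    exact (Dfun_hasDeriv hx' (by linarith)).differentiableAt.differentiableWithinAt

private lemma q_lt_one {α v x : ℝ} (hα0 : 0 < α) (hv : 0 < v) (hx : 0 ≤ x) :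
    (x / (x + v)) ^ α < 1 :=
  Real.rpow_lt_one (by positivity) (by rw [div_lt_one (by linarith)]; linarith) hα0

private lemma Ffun_hasDeriv {α v x : ℝ} (hα0 : 0 < α) (hv : 0 < v) (hx : 0 < x) :
    HasDerivAt (Ffun α v) (-(α * v) / Dfun α v x) x := by
  have hxv : 0 < x + v := by linarith
  have hcpos : 0 < x / (x + v) := div_pos hx hxv
  have hq1 : (x / (x + v)) ^ α < 1 := q_lt_one hα0 hv hx.le
  have hu : HasDerivAt (fun y : ℝ => y / (y + v)) (v / (x + v) ^ 2) x := by
    have := (hasDerivAt_id x).div ((hasDerivAt_id x).add_const v) hxv.ne'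
    convert this using 1
    · rfl
    · rfl
    · rfl
    simp only [id]
    field_simp
    ring
  have hq : HasDerivAt (fun y : ℝ => (y / (y + v)) ^ α)
      (v / (x + v) ^ 2 * α * (x / (x + v)) ^ (α - 1)) x := hu.rpow_const (Or.inl hcpos.ne')
  have hg : HasDerivAt (fun y : ℝ => 1 - (y / (y + v)) ^ α)
      (-(v / (x + v) ^ 2 * α * (x / (x + v)) ^ (α - 1))) x := by
    exact hq.const_sub 1
  have hne : 1 - (x / (x + v)) ^ α ≠ 0 := by linarith
  have hlog := hg.log hne
  convert hlog using 1
  · rfl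
  have hA : (0:ℝ) < x ^ α := Real.rpow_pos_of_pos hx α
  have hB : (0:ℝ) < (x + v) ^ α := Real.rpow_pos_of_pos hxv α
  have hcα : (x / (x + v)) ^ α = x ^ α / (x + v) ^ α := Real.div_rpow hx.le hxv.le α
  have hcm : (x / (x + v)) ^ (α - 1) = (x ^ α / (x + v) ^ α) / (x / (x + v)) := by
    rw [Real.rpow_sub hcpos, Real.rpow_one, hcα]
  have hDpos : 0 < Dfun α v x := Dfun_pos hα0 hv hx
  rw [Dfun_eq hx hxv, hcm, hcα]
  rw [Dfun_eq hx hxv] at hDpos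
  have h1q : (0:ℝ) < 1 - x ^ α / (x + v) ^ α := by rw [hcα] at hq1; linarith
  rw [div_eq_div_iff hDpos.ne' ?_]
  · field_simp
  · linarith

private lemma Ffun_convex {α v : ℝ} (hα0 : 0 < α) (hα1 : α ≤ 1) (hv : 0 < v) :
    ConvexOn ℝ (Icc (0:ℝ) 1) (Ffun α v) := by
  have hmono : MonotoneOn (deriv (Ffun α v)) (interior (Icc (0:ℝ) 1)) := by
    rw [interior_Icc]
    intro x hx y hy hxy
    rw [(Ffun_hasDeriv hα0 hv hx.1).deriv, (Ffun_hasDeriv hα0 hv hy.1).deriv]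
    have hDx : 0 < Dfun α v x := Dfun_pos hα0 hv hx.1
    have hDy : 0 < Dfun α v y := Dfun_pos hα0 hv hy.1
    have hDxy : Dfun α v x ≤ Dfun α v y := Dfun_mono hα0 hα1 hv hx.1 hy.1 hxy
    rw [neg_div, neg_div, neg_le_neg_iff]
    exact div_le_div_of_nonneg_left (by positivity) hDx hDxy
  refine MonotoneOn.convexOn_of_deriv (convex_Icc 0 1) ?_ ?_ hmono
  · apply ContinuousOn.log
    · apply (continuousOn_const).sub
      apply ContinuousOn.rpow_const
      · exact (continuousOn_id.div ((continuous_add_right v).continuousOn) (fun x hx => by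
          have : (0:ℝ) ≤ x := hx.1; positivity))
      · intro x hx
        exact Or.inr hα0.le
    · intro x hx
      have := q_lt_one (v := v) (x := x) hα0 hv hx.1
      intro h; linarith [h]
  · rw [interior_Icc]
    intro x hx
    exact (Ffun_hasDeriv hα0 hv hx.1).differentiableAt.differentiableWithinAt

private lemma star_ineq {α v θ : ℝ} (hα0 : 0 < α) (hα1 : α ≤ 1) (hv : 0 ≤ v)
    (hθ0 : 0 < θ) (hθ1 : θ ≤ 1) :
    1 - (1 + v / θ) ^ (-α) ≤ (1 - (1 + v) ^ (-α)) ^ θ := by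
  rcases eq_or_lt_of_le hv with hv0 | hv
  · rw [← hv0]
    simp only [zero_div, add_zero]
    rw [Real.one_rpow, sub_self, Real.zero_rpow hθ0.ne']
  · have hθv : 0 < θ + v := by linarith
    have h1v : (0:ℝ) < 1 + v := by linarith
    have e1 : (1 + v / θ) ^ (-α) = (θ / (θ + v)) ^ α := by
      rw [show (1 + v / θ) = ((θ + v) / θ) by field_simp,
        Real.rpow_neg (by positivity), ← Real.inv_rpow (by positivity), inv_div]
    have e2 : (1 + v) ^ (-α) = (1 / (1 + v)) ^ α := by
      rw [Real.rpow_neg h1v.le, ← Real.inv_rpow h1v.le, one_div]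
    rw [e1, e2]
    have hqθ : 0 < 1 - (θ / (θ + v)) ^ α := by
      linarith [q_lt_one (v := v) (x := θ) hα0 hv hθ0.le]
    have hq1 : 0 < 1 - (1 / (1 + v)) ^ α := by
      have := q_lt_one (v := v) (x := 1) hα0 hv zero_le_one
      norm_num at this ⊢; linarith
    have hconv := Ffun_convex hα0 hα1 hv
    have hF0 : Ffun α v 0 = 0 := by
      simp [Ffun, zero_div, Real.zero_rpow hα0.ne']
    have hFθ : Ffun α v θ ≤ θ * Ffun α v 1 := by
      have h := hconv.2 (mem_Icc.mpr ⟨le_refl (0:ℝ), zero_le_one⟩)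
        (mem_Icc.mpr ⟨zero_le_one, le_refl (1:ℝ)⟩)
        (show (0:ℝ) ≤ 1 - θ by linarith) hθ0.le (by ring)
      simp only [smul_eq_mul, mul_zero, mul_one, zero_add, hF0] at h
      linarith
    calc 1 - (θ / (θ + v)) ^ α = Real.exp (Ffun α v θ) := (Real.exp_log hqθ).symm
      _ ≤ Real.exp (θ * Ffun α v 1) := Real.exp_le_exp.mpr hFθ
      _ = (1 - (1 / (1 + v)) ^ α) ^ θ := by
          rw [Real.rpow_def_of_pos hq1, mul_comm]
          rfl

end Scalar

/-- For iid Pareto(α), `α ∈ (0,1]`, weights in the simplex and a real `m ≥ 1`: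
`max(X,m) ≤_st ∑ θᵢ max(Xᵢ,m)` and `(X−m)₊ ≤_st ∑ θᵢ (Xᵢ−m)₊`. -/
theorem stmt8 {Ω : Type*} [MeasurableSpace Ω] (P : Measure Ω) [IsProbabilityMeasure P]
    (n : ℕ) (α : ℝ) (hα : α ∈ Set.Ioc (0:ℝ) 1) (m : ℝ) (hm : 1 ≤ m)
    (X : Ω → ℝ) (Xs : Fin n → Ω → ℝ)
    (hX : IsPareto P X α) (hXs : ∀ i, IsPareto P (Xs i) α)
    (hind : iIndepFun Xs P)
    (θ : Fin n → ℝ) (hθ : ∀ i, 0 ≤ θ i) (hsum : ∑ i, θ i = 1) :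
    (∀ t : ℝ, P {ω | t < max (X ω) m} ≤ P {ω | t < ∑ i, θ i * max (Xs i ω) m})
    ∧ (∀ t : ℝ, P {ω | t < max (X ω - m) 0}
        ≤ P {ω | t < ∑ i, θ i * max (Xs i ω - m) 0}) := by
  obtain ⟨hα0, hα1⟩ := hα
  have main : ∀ t : ℝ, P {ω | t < max (X ω) m} ≤ P {ω | t < ∑ i, θ i * max (Xs i ω) m} := by
    intro t
    by_cases hmt : t < m
    · have huniv : {ω : Ω | t < ∑ i, θ i * max (Xs i ω) m} = univ := by
        ext ω
        simp only [mem_setOf_eq, mem_univ, iff_true]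
        have hsm : m = ∑ i, θ i * m := by rw [← Finset.sum_mul, hsum, one_mul]
        calc t < m := hmt
          _ = ∑ i, θ i * m := hsm
          _ ≤ ∑ i, θ i * max (Xs i ω) m := Finset.sum_le_sum fun i _ =>
              mul_le_mul_of_nonneg_left (le_max_right _ _) (hθ i)
      rw [huniv, measure_univ]
      exact prob_le_one
    · push_neg at hmt
      have ht1 : (1:ℝ) ≤ t := le_trans hm hmt
      have htpos : (0:ℝ) < t := by linarith
      have hLset : {ω : Ω | t < max (X ω) m} = {ω : Ω | t < X ω} := by
        ext ω
        simp only [mem_setOf_eq, lt_max_iff]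
        constructor
        · rintro (h | h)
          · exact h
          · linarith
        · exact Or.inl
      rw [hLset, hX.2.2 t ht1]
      set p : ℝ := t ^ (-α) with hp
      have hppos : 0 < p := Real.rpow_pos_of_pos htpos _
      have hple : p ≤ 1 := Real.rpow_le_one_of_one_le_of_nonpos ht1 (by linarith)
      set I : Finset (Fin n) := Finset.univ.filter (fun i => θ i ≠ 0) with hI
      set s : Fin n → ℝ := fun i => (t - (1 - θ i) * m) / θ i with hs
      have hθpos : ∀ i ∈ I, 0 < θ i := by
        intro i hi
        rw [hI, Finset.mem_filter] at hi
        exact lt_of_le_of_ne (hθ i) (Ne.symm hi.2)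
      have hθle1 : ∀ i, θ i ≤ 1 := by
        intro i
        rw [← hsum]
        exact Finset.single_le_sum (fun j _ => hθ j) (Finset.mem_univ i)
      have hs_ge : ∀ i ∈ I, t ≤ s i := by
        intro i hi
        have h := hθpos i hi
        rw [hs, le_div_iff₀ h]
        nlinarith [hθle1 i]
      have hs1 : ∀ i ∈ I, (1:ℝ) ≤ s i := fun i hi => le_trans ht1 (hs_ge i hi)
      set B : Fin n → Set Ω := fun i => {ω | s i < Xs i ω} with hB
      have hBmeas : ∀ i, MeasurableSet (B i) := fun i => (hXs i).1 measurableSet_Ioi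
      -- union is inside the target event
      have hBsub : ∀ i ∈ I, B i ⊆ {ω : Ω | t < ∑ j, θ j * max (Xs j ω) m} := by
        intro i hi ω hω
        have hθi := hθpos i hi
        have hXω : s i < Xs i ω := hω
        simp only [mem_setOf_eq]
        have hsplit : ∑ j, θ j * max (Xs j ω) m
            = (∑ j ∈ Finset.univ.erase i, θ j * max (Xs j ω) m) + θ i * max (Xs i ω) m :=
          (Finset.sum_erase_add _ _ (Finset.mem_univ i)).symm
        have hrest : ∑ j ∈ Finset.univ.erase i, θ j * m
            ≤ ∑ j ∈ Finset.univ.erase i, θ j * max (Xs j ω) m :=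
          Finset.sum_le_sum fun j _ => mul_le_mul_of_nonneg_left (le_max_right _ _) (hθ j)
        have hrest_eq : ∑ j ∈ Finset.univ.erase i, θ j * m = (1 - θ i) * m := by
          rw [← Finset.sum_mul]
          congr 1
          have := Finset.sum_erase_add Finset.univ θ (Finset.mem_univ i)
          linarith [hsum ▸ this]
        have hmaxi : θ i * s i < θ i * max (Xs i ω) m :=
          mul_lt_mul_of_pos_left (lt_max_iff.mpr (Or.inl hXω)) hθi
        have hsi : θ i * s i = t - (1 - θ i) * m := by
          rw [hs]; field_simp
        rw [hsplit]
        calc t = (1 - θ i) * m + (t - (1 - θ i) * m) := by ring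
          _ = (1 - θ i) * m + θ i * s i := by rw [hsi]
          _ < (1 - θ i) * m + θ i * max (Xs i ω) m := by linarith
          _ ≤ (∑ j ∈ Finset.univ.erase i, θ j * max (Xs j ω) m) + θ i * max (Xs i ω) m := by
              rw [← hrest_eq]; linarith
      -- probabilities of the events
      set q : Fin n → ℝ := fun i => (s i) ^ (-α) with hq
      have hq0 : ∀ i ∈ I, 0 ≤ q i := fun i hi =>
        Real.rpow_nonneg (by linarith [hs1 i hi]) _
      have hq1' : ∀ i ∈ I, q i ≤ 1 := fun i hi =>
        Real.rpow_le_one_of_one_le_of_nonpos (hs1 i hi) (by linarith)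
      have hPB : ∀ i ∈ I, P ((B i)ᶜ) = ENNReal.ofReal (1 - q i) := by
        intro i hi
        have h1 : P (B i) = ENNReal.ofReal (q i) := (hXs i).2.2 (s i) (hs1 i hi)
        have h2 : P ((B i)ᶜ) = 1 - P (B i) := by
          rw [measure_compl (hBmeas i) (measure_ne_top P _), measure_univ]
        rw [h2, h1, ← ENNReal.ofReal_one, ← ENNReal.ofReal_sub _ (hq0 i hi)]
      -- independence
      have hIndep : P (⋂ i ∈ I, (B i)ᶜ) = ∏ i ∈ I, P ((B i)ᶜ) := by
        apply hind.meas_biInter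
        intro i hi
        exact ⟨Iic (s i), measurableSet_Iic, by
          ext ω; simp [hB, not_lt]⟩
      -- the scalar product bound
      have hfac : ∀ i ∈ I, 1 - q i ≤ (1 - p) ^ (θ i) := by
        intro i hi
        have hθi := hθpos i hi
        have hsle : s i ≤ 1 + (t - 1) / θ i := by
          show (t - (1 - θ i) * m) / θ i ≤ 1 + (t - 1) / θ i
          rw [show 1 + (t - 1) / θ i = (θ i + (t - 1)) / θ i by field_simp,
            div_le_div_iff₀ hθi hθi]
          nlinarith [mul_nonneg (mul_nonneg hθi.le (sub_nonneg.mpr (hθle1 i)))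
            (sub_nonneg.mpr hm)]
        have hspos : (0:ℝ) < s i := by linarith [hs1 i hi]
        have h2 : (1 + (t - 1) / θ i) ^ (-α) ≤ q i :=
          Real.rpow_le_rpow_of_nonpos hspos hsle (by linarith)
        have h3 := star_ineq (v := t - 1) (θ := θ i) hα0 hα1 (by linarith) hθi (hθle1 i)
        rw [show (1:ℝ) + (t - 1) = t by ring] at h3
        rw [hp]
        linarith
      have hprod : ∏ i ∈ I, (1 - q i) ≤ 1 - p := by
        calc ∏ i ∈ I, (1 - q i) ≤ ∏ i ∈ I, (1 - p) ^ (θ i) :=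
              Finset.prod_le_prod (fun i hi => by linarith [hq1' i hi]) hfac
          _ = ∏ i, (1 - p) ^ (θ i) := by
              refine Finset.prod_subset (Finset.subset_univ I) ?_
              intro i _ hi
              have : θ i = 0 := by
                by_contra hne
                exact hi (by rw [hI]; exact Finset.mem_filter.mpr ⟨Finset.mem_univ i, hne⟩)
              rw [this, Real.rpow_zero]
          _ = (1 - p) ^ (∑ i, θ i) :=
              (Real.rpow_sum_of_nonneg (by linarith) (fun i _ => hθ i)).symm
          _ = 1 - p := by rw [hsum, Real.rpow_one]
      -- assemble
      have hprodP : P (⋂ i ∈ I, (B i)ᶜ) = ENNReal.ofReal (∏ i ∈ I, (1 - q i)) := by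
        rw [hIndep, Finset.prod_congr rfl hPB,
          ENNReal.ofReal_prod_of_nonneg (fun i hi => by linarith [hq1' i hi])]
      have hUmeas : MeasurableSet (⋃ i ∈ I, B i) :=
        MeasurableSet.biUnion I.countable_toSet (fun i _ => hBmeas i)
      have hcompl : (⋃ i ∈ I, B i)ᶜ = ⋂ i ∈ I, (B i)ᶜ := by
        simp [compl_iUnion]
      have hsplit : P (⋃ i ∈ I, B i) + ENNReal.ofReal (∏ i ∈ I, (1 - q i)) = 1 := by
        rw [← hprodP, ← hcompl]
        exact prob_add_prob_compl hUmeas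
      have hchain : ENNReal.ofReal p + ENNReal.ofReal (∏ i ∈ I, (1 - q i)) ≤ 1 := by
        rw [← ENNReal.ofReal_add hppos.le
          (Finset.prod_nonneg (fun i hi => by linarith [hq1' i hi]))]
        apply ENNReal.ofReal_le_one.mpr
        linarith
      have hfin : ENNReal.ofReal (∏ i ∈ I, (1 - q i)) ≠ ⊤ := ENNReal.ofReal_ne_top
      have h1 : ENNReal.ofReal p ≤ P (⋃ i ∈ I, B i) := by
        have := hsplit ▸ hchain
        exact ENNReal.le_of_add_le_add_right hfin this
      exact le_trans h1 (measure_mono (iUnion₂_subset hBsub))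
  refine ⟨main, ?_⟩
  intro t
  have hset1 : {ω : Ω | t < max (X ω - m) 0} = {ω : Ω | t + m < max (X ω) m} := by
    ext ω
    simp only [mem_setOf_eq]
    rw [show (0:ℝ) = m - m by ring, max_sub_sub_right, lt_sub_iff_add_lt]
  have hset2 : {ω : Ω | t < ∑ i, θ i * max (Xs i ω - m) 0}
      = {ω : Ω | t + m < ∑ i, θ i * max (Xs i ω) m} := by
    ext ω
    simp only [mem_setOf_eq]
    have : ∑ i, θ i * max (Xs i ω - m) 0 = (∑ i, θ i * max (Xs i ω) m) - m := by
      have e1 : ∀ i, θ i * max (Xs i ω - m) 0 = θ i * max (Xs i ω) m - θ i * m := by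
        intro i
        rw [show (0:ℝ) = m - m by ring, max_sub_sub_right]
        ring
      rw [Finset.sum_congr rfl (fun i _ => e1 i), Finset.sum_sub_distrib, ← Finset.sum_mul,
        hsum, one_mul]
    rw [this, lt_sub_iff_add_lt]
  rw [hset1, hset2]
  exact main (t + m)
end

section
/- Let X, X₁, X₂, … be iid Pareto(α) random variables with α ∈ (0,1], and let N be an ℕ-valued (counting) random variable independent of the sequence. Then X·𝟙{N ≥ 1} ≤_st (1/N)∑_{i=1}^{N} Xᵢ (with the convention that the average is 0 when N = 0), and N·X ≤_st ∑_{i=1}^{N} Xᵢ. -/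
open MeasureTheory ProbabilityTheory Set

set_option linter.unusedSectionVars false

section Aux


lemma bern_aux (c : ℝ) (hc : 0 ≤ c) (n : ℕ) (hn : 1 ≤ n) :
    (c / (c + 1)) ^ n ≤ c / (c + n) := by
  rcases eq_or_lt_of_le hc with h | h
  · rw [← h]
    simp [zero_pow (by omega : n ≠ 0)]
  · have h1 : (0:ℝ) < c + 1 := by linarith
    have hn0 : (0:ℝ) < n := by exact_mod_cast Nat.pos_of_ne_zero (by omega)
    have hn' : (0:ℝ) < c + n := by linarith
    rw [div_pow, div_le_div_iff₀ (pow_pos h1 n) hn']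
    have hd : (0:ℝ) ≤ 1/c := by positivity
    have hb := one_add_mul_le_pow (a := 1/c) (by linarith : (-2:ℝ) ≤ 1/c) n
    have h2 : (c + n)/c ≤ (c+1)^n / c^n := by
      calc (c + n)/c = 1 + n * (1/c) := by field_simp
        _ ≤ (1 + 1/c)^n := hb
        _ = (c+1)^n / c^n := by rw [← div_pow]; congr 1; field_simp
    rw [div_le_div_iff₀ h (pow_pos h n)] at h2
    nlinarith [h2]

lemma bern (α : ℝ) (hα1 : 0 < α) (n : ℕ) (hn : 1 ≤ n) (s : ℝ) (hs : 1 ≤ s) :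
    (1 - ((n:ℝ) * s ^ α - n + 1)⁻¹) ^ n ≤ 1 - s ^ (-α) := by
  have hsa : (1:ℝ) ≤ s ^ α := Real.one_le_rpow hs hα1.le
  have hn1 : (1:ℝ) ≤ n := by exact_mod_cast hn
  set c : ℝ := (n:ℝ) * (s ^ α - 1) with hcdef
  have hc : 0 ≤ c := mul_nonneg (by linarith) (by linarith)
  have e1 : (n:ℝ) * s ^ α - n + 1 = c + 1 := by rw [hcdef]; ring
  have e2 : 1 - (c+1)⁻¹ = c/(c+1) := by field_simp; ring
  have e3 : s ^ (-α) = n / (c + n) := by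
    rw [Real.rpow_neg (by linarith : (0:ℝ) ≤ s)]
    have hcn : c + n = n * s ^ α := by rw [hcdef]; ring
    rw [hcn, eq_div_iff (by positivity : ((n:ℝ) * s ^ α) ≠ 0)]
    rw [inv_mul_eq_div, div_eq_iff (by positivity : (s^α) ≠ 0)]
  have e4 : 1 - s^(-α) = c/(c+n) := by
    rw [e3]; field_simp; ring
  rw [e1, e2, e4]
  exact bern_aux c hc n hn


lemma pm (α : ℝ) (hα0 : 0 < α) (hα1 : α ≤ 1) (n : ℕ) (hn : 1 ≤ n) (s : ℝ) (hs : 1 ≤ s)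
    (x : ℕ → ℝ) (hx : ∀ i ∈ Finset.range n, 1 ≤ x i) {i₀ : ℕ} (hi₀ : i₀ ∈ Finset.range n)
    (hbig : ((n:ℝ) * s ^ α - n + 1) ^ α⁻¹ < x i₀) :
    (n:ℝ) * s < ∑ i ∈ Finset.range n, x i := by
  have hn1 : (1:ℝ) ≤ n := by exact_mod_cast hn
  have hnpos : (0:ℝ) < n := by linarith
  have hsa : (1:ℝ) ≤ s ^ α := Real.one_le_rpow hs hα0.le
  have hb1 : (1:ℝ) ≤ (n:ℝ) * s ^ α - n + 1 := by nlinarith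
  have hb0 : (0:ℝ) ≤ (n:ℝ) * s ^ α - n + 1 := by linarith
  -- big term in α-space
  have hxi : (n:ℝ) * s ^ α - n + 1 < x i₀ ^ α := by
    have h := Real.rpow_lt_rpow (Real.rpow_nonneg hb0 _) hbig hα0
    rwa [← Real.rpow_mul hb0, inv_mul_cancel₀ hα0.ne', Real.rpow_one] at h
  -- sum in α-space
  have key1 : (n:ℝ) * s ^ α < ∑ i ∈ Finset.range n, x i ^ α := by
    have hsum : ∑ i ∈ Finset.range n, (if i = i₀ then ((n:ℝ) * s ^ α - n + 1) else 1)
        = (n:ℝ) * s ^ α := by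
      have : (fun i => if i = i₀ then ((n:ℝ) * s ^ α - n + 1) else 1)
          = fun i => (if i = i₀ then ((n:ℝ) * s ^ α - n) else 0) + 1 := by
        funext i; split <;> ring
      rw [this, Finset.sum_add_distrib, Finset.sum_ite_eq' (Finset.range n) i₀
        (fun _ => (n:ℝ) * s ^ α - n), if_pos hi₀]
      simp only [Finset.sum_const, Finset.card_range, nsmul_eq_mul, mul_one]
      ring
    rw [← hsum]
    refine Finset.sum_lt_sum (fun i hi => ?_) ⟨i₀, hi₀, by simp [hxi]⟩
    split
    · next h => subst h; exact hxi.le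
    · exact Real.one_le_rpow (hx i hi) hα0.le
  -- power mean inequality
  have hz : ∀ i ∈ Finset.range n, (0:ℝ) ≤ x i ^ α := fun i hi =>
    Real.rpow_nonneg (by linarith [hx i hi]) _
  have hpm := Real.arith_mean_le_rpow_mean (Finset.range n) (fun _ => (n:ℝ)⁻¹)
    (fun i => x i ^ α) (fun i _ => by positivity)
    (by simp [Finset.sum_const, Finset.card_range]; field_simp) hz
    (p := α⁻¹) ((one_le_inv_iff₀).2 ⟨hα0, hα1⟩)
  have hrw : ∀ i ∈ Finset.range n, (n:ℝ)⁻¹ * (x i ^ α) ^ α⁻¹ = (n:ℝ)⁻¹ * x i := by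
    intro i hi
    rw [← Real.rpow_mul (by linarith [hx i hi] : (0:ℝ) ≤ x i), mul_inv_cancel₀ hα0.ne',
      Real.rpow_one]
  rw [Finset.sum_congr rfl hrw] at hpm
  rw [← Finset.mul_sum, ← Finset.mul_sum, one_div, inv_inv] at hpm
  -- combine
  have hS0 : (0:ℝ) ≤ (n:ℝ)⁻¹ * ∑ i ∈ Finset.range n, x i := by
    have : (0:ℝ) ≤ ∑ i ∈ Finset.range n, x i :=
      Finset.sum_nonneg fun i hi => by linarith [hx i hi]
    positivity
  have hchain : s ^ α < ((n:ℝ)⁻¹ * ∑ i ∈ Finset.range n, x i) ^ α := by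
    calc s ^ α = (n:ℝ)⁻¹ * ((n:ℝ) * s ^ α) := by field_simp
      _ < (n:ℝ)⁻¹ * ∑ i ∈ Finset.range n, x i ^ α := by
          exact mul_lt_mul_of_pos_left key1 (by positivity)
      _ ≤ _ := hpm
  by_contra hcon
  push_neg at hcon
  have : (n:ℝ)⁻¹ * ∑ i ∈ Finset.range n, x i ≤ s := by
    rw [inv_mul_le_iff₀ hnpos]
    nlinarith
  exact absurd (Real.rpow_le_rpow hS0 this hα0.le) (not_le.2 hchain)

section Core
variable {Ω : Type*} [MeasurableSpace Ω] (P : Measure Ω) [IsProbabilityMeasure P]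

variable {Ω : Type*} [MeasurableSpace Ω] (P : Measure Ω) [IsProbabilityMeasure P]

lemma bad_null (α : ℝ) (Xs : ℕ → Ω → ℝ) (hXs : ∀ i, IsPareto P (Xs i) α) (n : ℕ) :
    P (⋃ i ∈ Finset.range n, {ω | Xs i ω < 1}) = 0 := by
  refine measure_biUnion_null_iff (Finset.countable_toSet _) |>.2 fun i _ => ?_
  have hm : MeasurableSet {ω | 1 ≤ Xs i ω} := measurableSet_le measurable_const (hXs i).1
  have h : {ω | Xs i ω < 1} = {ω | 1 ≤ Xs i ω}ᶜ := by ext ω; simp [not_le]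
  rw [h, measure_compl hm (measure_ne_top _ _), (hXs i).2.1]
  simp

lemma core_s9 (α : ℝ) (hα : α ∈ Set.Ioc (0:ℝ) 1) (Xs : ℕ → Ω → ℝ)
    (hXs : ∀ i, IsPareto P (Xs i) α)
    (hind : iIndepFun Xs P)
    (n : ℕ) (hn : 1 ≤ n) (s : ℝ) (hs : 1 ≤ s) :
    ENNReal.ofReal (s ^ (-α)) ≤ P {ω | (n:ℝ) * s < ∑ i ∈ Finset.range n, Xs i ω} := by
  obtain ⟨hα0, hα1⟩ := hα
  have hn1 : (1:ℝ) ≤ n := by exact_mod_cast hn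
  have hsa : (1:ℝ) ≤ s ^ α := Real.one_le_rpow hs hα0.le
  set b : ℝ := (n:ℝ) * s ^ α - n + 1 with hbdef
  have hb1 : (1:ℝ) ≤ b := by rw [hbdef]; nlinarith
  set m : ℝ := b ^ α⁻¹ with hmdef
  have hm1 : (1:ℝ) ≤ m := Real.one_le_rpow hb1 (by positivity)
  set E : Set Ω := ⋃ i ∈ Finset.range n, {ω | m < Xs i ω} with hEdef
  have hEmeas : MeasurableSet E := by
    refine MeasurableSet.biUnion (Finset.countable_toSet _) fun i _ => ?_
    exact measurableSet_lt measurable_const (hXs i).1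
  have hb0 : (0:ℝ) < b := by linarith
  have h0 : (0:ℝ) ≤ 1 - b⁻¹ := by
    have : b⁻¹ ≤ 1 := inv_le_one_of_one_le₀ hb1
    linarith
  -- P(Eᶜ)
  have hEcP : P Eᶜ = ENNReal.ofReal ((1 - b⁻¹) ^ n) := by
    have hEc : Eᶜ = ⋂ i ∈ Finset.range n, (Xs i) ⁻¹' (Iic m) := by
      rw [hEdef, compl_iUnion₂]
      refine iInter₂_congr fun i _ => ?_
      ext ω; simp [not_lt]
    rw [hEc, hind.meas_biInter (fun i _ => ⟨Iic m, measurableSet_Iic, rfl⟩)]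
    have hma : m ^ (-α) = b⁻¹ := by
      rw [hmdef, ← Real.rpow_mul hb0.le, show α⁻¹ * (-α) = -1 by field_simp,
        Real.rpow_neg_one]
    have hone : ∀ i, P ((Xs i) ⁻¹' (Iic m)) = ENNReal.ofReal (1 - b⁻¹) := by
      intro i
      have hmeas : MeasurableSet {ω | m < Xs i ω} :=
        measurableSet_lt measurable_const (hXs i).1
      have hcompl : (Xs i) ⁻¹' (Iic m) = {ω | m < Xs i ω}ᶜ := by
        ext ω; simp [not_lt]
      rw [hcompl, prob_compl_eq_one_sub hmeas, (hXs i).2.2 m hm1, hma,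
        ENNReal.ofReal_sub _ (by positivity), ENNReal.ofReal_one]
    rw [Finset.prod_congr rfl (fun i _ => hone i), Finset.prod_const, Finset.card_range,
      ← ENNReal.ofReal_pow h0]
  -- P(E) ≥ s^{-α}
  have hsle : s ^ (-α) ≤ 1 := Real.rpow_le_one_of_one_le_of_nonpos hs (by linarith)
  have hEge : ENNReal.ofReal (s ^ (-α)) ≤ P E := by
    have hPE : P E = 1 - P Eᶜ := by
      have hadd := measure_add_measure_compl (μ := P) hEmeas
      rw [measure_univ] at hadd
      exact ENNReal.eq_sub_of_add_eq (measure_ne_top _ _) hadd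
    have hb' : P Eᶜ ≤ ENNReal.ofReal (1 - s ^ (-α)) := by
      rw [hEcP]
      exact ENNReal.ofReal_le_ofReal (bern α hα0 n hn s hs)
    have heq : ENNReal.ofReal (s ^ (-α)) = 1 - ENNReal.ofReal (1 - s ^ (-α)) := by
      rw [← ENNReal.ofReal_one, ← ENNReal.ofReal_sub _ (by linarith)]
      norm_num
    rw [hPE, heq]
    exact tsub_le_tsub_left hb' 1
  -- E minus bad set is inside the target
  refine hEge.trans ?_
  have hsub : E ⊆ {ω | (n:ℝ) * s < ∑ i ∈ Finset.range n, Xs i ω}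
      ∪ ⋃ i ∈ Finset.range n, {ω | Xs i ω < 1} := by
    intro ω hω
    by_cases hgood : ∀ i ∈ Finset.range n, 1 ≤ Xs i ω
    · left
      simp only [hEdef, mem_iUnion, mem_setOf_eq, exists_prop] at hω
      obtain ⟨i₀, hi₀, hlt⟩ := hω
      exact pm α hα0 hα1 n hn s hs (fun i => Xs i ω) hgood (by simpa using hi₀) hlt
    · right
      push_neg at hgood
      obtain ⟨i, hi, hlt⟩ := hgood
      simp only [mem_iUnion, mem_setOf_eq, exists_prop]
      exact ⟨i, hi, by linarith⟩
  calc P E ≤ P ({ω | (n:ℝ) * s < ∑ i ∈ Finset.range n, Xs i ω}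
        ∪ ⋃ i ∈ Finset.range n, {ω | Xs i ω < 1}) := measure_mono hsub
    _ ≤ P {ω | (n:ℝ) * s < ∑ i ∈ Finset.range n, Xs i ω}
        + P (⋃ i ∈ Finset.range n, {ω | Xs i ω < 1}) := measure_union_le _ _
    _ = P {ω | (n:ℝ) * s < ∑ i ∈ Finset.range n, Xs i ω} := by
        rw [bad_null P α Xs hXs n, add_zero]

lemma sum_one (α : ℝ) (Xs : ℕ → Ω → ℝ) (hXs : ∀ i, IsPareto P (Xs i) α)
    (n : ℕ) (t : ℝ) (ht : t < n) :
    P {ω | t < ∑ i ∈ Finset.range n, Xs i ω} = 1 := by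
  refine le_antisymm prob_le_one ?_
  have hsub : (⋃ i ∈ Finset.range n, {ω | Xs i ω < 1})ᶜ
      ⊆ {ω | t < ∑ i ∈ Finset.range n, Xs i ω} := by
    intro ω hω
    simp only [compl_iUnion₂, mem_iInter, mem_compl_iff, mem_setOf_eq, not_lt] at hω
    have : (n:ℝ) ≤ ∑ i ∈ Finset.range n, Xs i ω := by
      calc (n:ℝ) = ∑ _i ∈ Finset.range n, (1:ℝ) := by simp
        _ ≤ _ := Finset.sum_le_sum fun i hi => hω i hi
    exact lt_of_lt_of_le ht this
  calc (1:ENNReal) = P (⋃ i ∈ Finset.range n, {ω | Xs i ω < 1})ᶜ := by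
        rw [prob_compl_eq_one_sub (by
          refine MeasurableSet.biUnion (Finset.countable_toSet _) fun i _ => ?_
          exact measurableSet_lt (hXs i).1 measurable_const),
          bad_null P α Xs hXs n, tsub_zero]
    _ ≤ _ := measure_mono hsub

lemma per1 (α : ℝ) (hα : α ∈ Set.Ioc (0:ℝ) 1) (X : Ω → ℝ) (Xs : ℕ → Ω → ℝ)
    (hX : IsPareto P X α) (hXs : ∀ i, IsPareto P (Xs i) α)
    (hind : iIndepFun Xs P)
    (n : ℕ) (hn : 1 ≤ n) (t : ℝ) :
    P {ω | t < X ω} ≤ P {ω | t < (∑ i ∈ Finset.range n, Xs i ω) / (n:ℝ)} := by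
  have hn1 : (1:ℝ) ≤ n := by exact_mod_cast hn
  have hnp : (0:ℝ) < n := by linarith
  have hset : {ω | t < (∑ i ∈ Finset.range n, Xs i ω) / (n:ℝ)}
      = {ω | (n:ℝ) * t < ∑ i ∈ Finset.range n, Xs i ω} := by
    ext ω; rw [mem_setOf_eq, mem_setOf_eq, lt_div_iff₀ hnp, mul_comm]
  rw [hset]
  rcases le_or_gt 1 t with ht | ht
  · rw [hX.2.2 t ht]
    exact core_s9 P α hα Xs hXs hind n hn t ht
  · rw [sum_one P α Xs hXs n ((n:ℝ)*t) (by nlinarith)]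
    exact prob_le_one

lemma per2 (α : ℝ) (hα : α ∈ Set.Ioc (0:ℝ) 1) (X : Ω → ℝ) (Xs : ℕ → Ω → ℝ)
    (hX : IsPareto P X α) (hXs : ∀ i, IsPareto P (Xs i) α)
    (hind : iIndepFun Xs P)
    (n : ℕ) (hn : 1 ≤ n) (t : ℝ) :
    P {ω | t < (n:ℝ) * X ω} ≤ P {ω | t < ∑ i ∈ Finset.range n, Xs i ω} := by
  have hn1 : (1:ℝ) ≤ n := by exact_mod_cast hn
  have hnp : (0:ℝ) < n := by linarith
  rcases le_or_gt (n:ℝ) t with ht | ht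
  · have hs : 1 ≤ t / (n:ℝ) := (le_div_iff₀ hnp).2 (by linarith)
    have h1 : {ω | t < (n:ℝ) * X ω} = {ω | t / (n:ℝ) < X ω} := by
      ext ω; rw [mem_setOf_eq, mem_setOf_eq, div_lt_iff₀ hnp, mul_comm]
    have h2 : {ω | t < ∑ i ∈ Finset.range n, Xs i ω}
        = {ω | (n:ℝ) * (t / (n:ℝ)) < ∑ i ∈ Finset.range n, Xs i ω} := by
      rw [mul_div_cancel₀ t hnp.ne']
    rw [h1, h2, hX.2.2 _ hs]
    exact core_s9 P α hα Xs hXs hind n hn _ hs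
  · rw [sum_one P α Xs hXs n t ht]
    exact prob_le_one

lemma decomp (N : Ω → ℕ) (hN : Measurable N) (B : ℕ → Set Ω)
    (hB : ∀ n, MeasurableSet (B n)) :
    P {ω | ω ∈ B (N ω)} = ∑' n, P (N ⁻¹' {n} ∩ B n) := by
  have hset : {ω | ω ∈ B (N ω)} = ⋃ n, (N ⁻¹' {n} ∩ B n) := by
    ext ω
    simp only [mem_iUnion, mem_inter_iff, mem_preimage, mem_singleton_iff, mem_setOf_eq]
    exact ⟨fun h => ⟨N ω, rfl, h⟩, fun ⟨n, hn, h⟩ => hn ▸ h⟩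
  rw [hset, measure_iUnion]
  · intro a b hab
    refine (Disjoint.preimage N ?_).mono inter_subset_left inter_subset_left
    simpa using hab
  · exact fun n => (hN (measurableSet_singleton n)).inter (hB n)
end Core

end Aux

/-- Collective risk model: for iid Pareto(α), `α ∈ (0,1]`, and a counting random
variable `N` independent of the losses, `X·𝟙{N ≥ 1} ≤_st (1/N)∑_{i<N} Xᵢ` and
`N·X ≤_st ∑_{i<N} Xᵢ` (the empty average/sum being 0). -/
theorem stmt9 {Ω : Type*} [MeasurableSpace Ω] (P : Measure Ω) [IsProbabilityMeasure P]
    (α : ℝ) (hα : α ∈ Set.Ioc (0:ℝ) 1)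
    (X : Ω → ℝ) (Xs : ℕ → Ω → ℝ) (N : Ω → ℕ)
    (hX : IsPareto P X α) (hXs : ∀ i, IsPareto P (Xs i) α)
    (hind : iIndepFun Xs P)
    (hN : Measurable N)
    (hNX : IndepFun N X P)
    (hNXs : IndepFun N (fun ω i => Xs i ω) P) :
    (∀ t : ℝ, P {ω | t < (if 1 ≤ N ω then X ω else 0)}
        ≤ P {ω | t < (∑ i ∈ Finset.range (N ω), Xs i ω) / (N ω : ℝ)})
    ∧ (∀ t : ℝ, P {ω | t < (N ω : ℝ) * X ω}
        ≤ P {ω | t < ∑ i ∈ Finset.range (N ω), Xs i ω}) := by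
  have hXm := hX.1
  have hXsm : ∀ (n : ℕ), Measurable fun ω => ∑ i ∈ Finset.range n, Xs i ω :=
    fun n => Finset.measurable_sum _ fun i _ => (hXs i).1
  have hSR : ∀ (n : ℕ) (t : ℝ),
      MeasurableSet {v : ℕ → ℝ | t < (∑ i ∈ Finset.range n, v i) / (n:ℝ)} :=
    fun n t => measurableSet_lt measurable_const
      (((Finset.measurable_sum _ fun i _ => measurable_pi_apply i)).div_const _)
  have hSR2 : ∀ (n : ℕ) (t : ℝ),
      MeasurableSet {v : ℕ → ℝ | t < ∑ i ∈ Finset.range n, v i} :=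
    fun n t => measurableSet_lt measurable_const
      (Finset.measurable_sum _ fun i _ => measurable_pi_apply i)
  constructor
  · intro t
    set BL : ℕ → Set Ω := fun n => {ω | t < (if 1 ≤ n then X ω else 0)} with hBLdef
    set BR : ℕ → Set Ω := fun n =>
      (fun ω i => Xs i ω) ⁻¹' {v : ℕ → ℝ | t < (∑ i ∈ Finset.range n, v i) / (n:ℝ)} with hBRdef
    have hBLm : ∀ n, MeasurableSet (BL n) := by
      intro n
      by_cases h : 1 ≤ n
      · simp only [hBLdef, if_pos h]
        exact measurableSet_lt measurable_const hXm
      · simp only [hBLdef, if_neg h]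
        exact MeasurableSet.const _
    have hBRm : ∀ n, MeasurableSet (BR n) := fun n =>
      (measurable_pi_lambda _ fun i => (hXs i).1) (hSR n t)
    have hL : P {ω | t < (if 1 ≤ N ω then X ω else 0)} = ∑' n, P (N ⁻¹' {n} ∩ BL n) :=
      decomp P N hN BL hBLm
    have hR : P {ω | t < (∑ i ∈ Finset.range (N ω), Xs i ω) / (N ω : ℝ)}
        = ∑' n, P (N ⁻¹' {n} ∩ BR n) := decomp P N hN BR hBRm
    rw [hL, hR]
    refine ENNReal.tsum_le_tsum fun n => ?_
    match n with
    | 0 =>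
      refine le_of_eq ?_
      congr 1
      simp [hBLdef, hBRdef]
    | (n+1) =>
      have hl := hNX.measure_inter_preimage_eq_mul {n+1} (Ioi t)
        (measurableSet_singleton _) measurableSet_Ioi
      have hr := hNXs.measure_inter_preimage_eq_mul {n+1}
        {v : ℕ → ℝ | t < (∑ i ∈ Finset.range (n+1), v i) / ((n+1:ℕ):ℝ)}
        (measurableSet_singleton _) (hSR (n+1) t)
      have hBL1 : BL (n+1) = X ⁻¹' (Ioi t) := by
        simp only [hBLdef, if_pos (by omega : 1 ≤ n+1)]
        rfl
      rw [hBL1, hBRdef, hl, hr]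
      refine mul_le_mul_right ?_ _
      exact per1 P α hα X Xs hX hXs hind (n+1) (by omega) t
  · intro t
    set BL : ℕ → Set Ω := fun n => X ⁻¹' {x : ℝ | t < (n:ℝ) * x} with hBLdef
    set BR : ℕ → Set Ω := fun n =>
      (fun ω i => Xs i ω) ⁻¹' {v : ℕ → ℝ | t < ∑ i ∈ Finset.range n, v i} with hBRdef
    have hSL : ∀ n : ℕ, MeasurableSet {x : ℝ | t < (n:ℝ) * x} :=
      fun n => measurableSet_lt measurable_const (measurable_id.const_mul _)
    have hBLm : ∀ n, MeasurableSet (BL n) := fun n => hXm (hSL n)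
    have hBRm : ∀ n, MeasurableSet (BR n) := fun n =>
      (measurable_pi_lambda _ fun i => (hXs i).1) (hSR2 n t)
    have hL : P {ω | t < (N ω : ℝ) * X ω} = ∑' n, P (N ⁻¹' {n} ∩ BL n) :=
      decomp P N hN BL hBLm
    have hR : P {ω | t < ∑ i ∈ Finset.range (N ω), Xs i ω}
        = ∑' n, P (N ⁻¹' {n} ∩ BR n) := decomp P N hN BR hBRm
    rw [hL, hR]
    refine ENNReal.tsum_le_tsum fun n => ?_
    match n with
    | 0 =>
      refine le_of_eq ?_
      congr 1
      simp [hBLdef, hBRdef]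
    | (n+1) =>
      have hl := hNX.measure_inter_preimage_eq_mul {n+1} {x : ℝ | t < ((n+1:ℕ):ℝ) * x}
        (measurableSet_singleton _) (hSL (n+1))
      have hr := hNXs.measure_inter_preimage_eq_mul {n+1}
        {v : ℕ → ℝ | t < ∑ i ∈ Finset.range (n+1), v i}
        (measurableSet_singleton _) (hSR2 (n+1) t)
      rw [hBLdef, hBRdef, hl, hr]
      refine mul_le_mul_right ?_ _
      exact per2 P α hα X Xs hX hXs hind (n+1) (by omega) t
end

section
/- Let X be a Pareto(α) random variable with α ∈ (0,1], let B₁,…,Bₙ be mutually exclusive (pairwise disjoint) events independent of X, and let c₁,…,cₙ ∈ [0,1]. Let A be an event independent of X with ℙ(A) = ∑ᵢ cᵢ ℙ(Bᵢ). Then X·𝟙_A ≤_st ∑ᵢ cᵢ X·𝟙_{Bᵢ}; i.e., for all t ≥ 0, ℙ(∑ᵢ cᵢ X 𝟙_{Bᵢ} > t) ≥ ℙ(X 𝟙_A > t). -/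
open MeasureTheory ProbabilityTheory Set

lemma tail_one {Ω : Type*} [MeasurableSpace Ω] (P : Measure Ω) [IsProbabilityMeasure P]
    (α : ℝ) (X : Ω → ℝ) (hX : IsPareto P X α) {t : ℝ} (ht : t < 1) :
    P {ω | t < X ω} = 1 := by
  refine le_antisymm prob_le_one ?_
  calc (1:ENNReal) = P {ω | 1 ≤ X ω} := hX.2.1.symm
    _ ≤ P {ω | t < X ω} := measure_mono fun ω hω => lt_of_lt_of_le ht hω

lemma tail_le {Ω : Type*} [MeasurableSpace Ω] (P : Measure Ω) [IsProbabilityMeasure P]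
    (α : ℝ) (hα : 0 < α) (X : Ω → ℝ) (hX : IsPareto P X α) {t : ℝ} (ht : 0 < t) :
    P {ω | t < X ω} ≤ ENNReal.ofReal (t ^ (-α)) := by
  rcases le_or_gt 1 t with h | h
  · exact (hX.2.2 t h).le
  · rw [tail_one P α X hX h, show (1:ENNReal) = ENNReal.ofReal 1 by simp]
    exact ENNReal.ofReal_le_ofReal
      (Real.one_le_rpow_of_pos_of_le_one_of_nonpos ht h.le (by linarith))

lemma key_ineq {Ω : Type*} [MeasurableSpace Ω] (P : Measure Ω) [IsProbabilityMeasure P]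
    (α : ℝ) (hα : α ∈ Set.Ioc (0:ℝ) 1) (X : Ω → ℝ) (hX : IsPareto P X α)
    {c t : ℝ} (hc : c ∈ Set.Icc (0:ℝ) 1) (ht : 0 ≤ t) :
    ENNReal.ofReal c * P {ω | t < X ω} ≤ P {ω | t < c * X ω} := by
  rcases eq_or_lt_of_le hc.1 with h0 | h0
  · simp [← h0]
  have hset : {ω | t < c * X ω} = {ω | t / c < X ω} := by
    ext ω; rw [Set.mem_setOf_eq, Set.mem_setOf_eq, div_lt_iff₀ h0, mul_comm]
  rw [hset]
  rcases lt_or_ge (t / c) 1 with h1 | h1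
  · rw [tail_one P α X hX h1]
    calc ENNReal.ofReal c * P {ω | t < X ω} ≤ 1 * 1 :=
          mul_le_mul' (by simpa using ENNReal.ofReal_le_ofReal hc.2) prob_le_one
      _ = 1 := one_mul 1
  · have htpos : 0 < t := by
      rcases eq_or_lt_of_le ht with h | h
      · exfalso; rw [← h] at h1; simp at h1; linarith
      · exact h
    rw [hX.2.2 _ h1]
    calc ENNReal.ofReal c * P {ω | t < X ω}
        ≤ ENNReal.ofReal c * ENNReal.ofReal (t ^ (-α)) :=
          mul_le_mul_right (tail_le P α hα.1 X hX htpos) _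
      _ = ENNReal.ofReal (c * t ^ (-α)) :=
          (ENNReal.ofReal_mul hc.1).symm
      _ ≤ ENNReal.ofReal ((t / c) ^ (-α)) := by
          apply ENNReal.ofReal_le_ofReal
          have hdiv : (t / c) ^ (-α) = t ^ (-α) * c ^ α := by
            rw [Real.div_rpow ht h0.le, Real.rpow_neg h0.le, div_eq_mul_inv, inv_inv]
          rw [hdiv, mul_comm (t ^ (-α)) (c ^ α)]
          apply mul_le_mul_of_nonneg_right _ (Real.rpow_nonneg ht _)
          calc c = c ^ (1:ℝ) := (Real.rpow_one c).symm
            _ ≤ c ^ α := Real.rpow_le_rpow_of_exponent_ge h0 hc.2 hα.2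

/-- Scaling lemma: for `X ~ Pareto(α)`, `α ∈ (0,1]`, pairwise disjoint events
`B₁,…,Bₙ` independent of `X`, coefficients `cᵢ ∈ [0,1]`, and an event `A` independent
of `X` with `P(A) = ∑ cᵢ P(Bᵢ)`, we have `X·𝟙_A ≤_st ∑ cᵢ X·𝟙_{Bᵢ}`. -/
theorem stmt10 {Ω : Type*} [MeasurableSpace Ω] (P : Measure Ω) [IsProbabilityMeasure P]
    (n : ℕ) (α : ℝ) (hα : α ∈ Set.Ioc (0:ℝ) 1)
    (X : Ω → ℝ) (hX : IsPareto P X α)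
    (B : Fin n → Set Ω) (hBmeas : ∀ i, MeasurableSet (B i))
    (hBdisj : Pairwise (Function.onFun Disjoint B))
    (hindB : IndepFun X (fun ω i => (B i).indicator (fun _ => (1:ℝ)) ω) P)
    (c : Fin n → ℝ) (hc : ∀ i, c i ∈ Set.Icc (0:ℝ) 1)
    (A : Set Ω) (hA : MeasurableSet A)
    (hindA : IndepFun X (A.indicator (fun _ => (1:ℝ))) P)
    (hPA : P A = ∑ i, ENNReal.ofReal (c i) * P (B i)) :
    ∀ t : ℝ, P {ω | t < X ω * A.indicator (fun _ => (1:ℝ)) ω}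
      ≤ P {ω | t < ∑ i, c i * X ω * (B i).indicator (fun _ => (1:ℝ)) ω} := by
  intro t
  have hXm : Measurable X := hX.1
  rcases lt_or_ge t 0 with htneg | ht
  · -- t < 0 : RHS has probability 1
    have h1 : (1:ENNReal) ≤ P {ω | t < ∑ i, c i * X ω * (B i).indicator (fun _ => (1:ℝ)) ω} := by
      calc (1:ENNReal) = P {ω | 1 ≤ X ω} := hX.2.1.symm
        _ ≤ _ := measure_mono ?_
      intro ω hω
      have : (0:ℝ) ≤ ∑ i, c i * X ω * (B i).indicator (fun _ => (1:ℝ)) ω :=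
        Finset.sum_nonneg fun i _ =>
          mul_nonneg (mul_nonneg (hc i).1 (by simp at hω; linarith))
            (Set.indicator_nonneg (fun _ _ => zero_le_one) ω)
      exact lt_of_lt_of_le htneg this
    exact le_trans prob_le_one h1
  · -- t ≥ 0
    -- LHS = P A * P {t < X}
    have hApre : (A.indicator (fun _ => (1:ℝ))) ⁻¹' {1} = A := by
      ext ω; by_cases hω : ω ∈ A <;> simp [hω]
    have hLset : {ω | t < X ω * A.indicator (fun _ => (1:ℝ)) ω}
        = X ⁻¹' (Set.Ioi t) ∩ (A.indicator (fun _ => (1:ℝ))) ⁻¹' {1} := by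
      ext ω; by_cases hω : ω ∈ A
      · simp [hω, Set.indicator_of_mem hω]
      · simp [hω, Set.indicator_of_notMem hω, not_lt.2 ht]
    have hL : P {ω | t < X ω * A.indicator (fun _ => (1:ℝ)) ω}
        = P {ω | t < X ω} * P A := by
      rw [hLset, hindA.measure_inter_preimage_eq_mul _ _ measurableSet_Ioi
        (measurableSet_singleton 1), hApre]
      rfl
    -- RHS ≥ ∑ i, P {t < cᵢ X} * P (Bᵢ)
    have hBpre : ∀ i, (fun ω j => (B j).indicator (fun _ => (1:ℝ)) ω) ⁻¹'
        ((Function.eval i) ⁻¹' {1}) = B i := by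
      intro i; ext ω; by_cases hω : ω ∈ B i <;> simp [Function.eval, hω]
    have hmeasS : ∀ i, MeasurableSet {x : ℝ | t < c i * x} :=
      fun i => measurableSet_lt measurable_const (measurable_id.const_mul _)
    have hBi : ∀ i, P (X ⁻¹' {x | t < c i * x} ∩ B i)
        = P {ω | t < c i * X ω} * P (B i) := by
      intro i
      conv_lhs => rw [← hBpre i]
      rw [hindB.measure_inter_preimage_eq_mul _ _ (hmeasS i)
        ((measurable_pi_apply i) (measurableSet_singleton 1)), hBpre i]
      rfl
    have hsub : (⋃ i, X ⁻¹' {x | t < c i * x} ∩ B i)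
        ⊆ {ω | t < ∑ i, c i * X ω * (B i).indicator (fun _ => (1:ℝ)) ω} := by
      rintro ω ⟨s, ⟨i, rfl⟩, hωi, hωB⟩
      have hsum : ∑ j, c j * X ω * (B j).indicator (fun _ => (1:ℝ)) ω
          = c i * X ω := by
        rw [Finset.sum_eq_single i]
        · simp [Set.indicator_of_mem hωB]
        · intro j _ hj
          have : ω ∉ B j := fun h => Set.disjoint_left.1 (hBdisj hj) h hωB
          simp [Set.indicator_of_notMem this]
        · simp
      simpa [hsum] using hωi
    have hdisj : Pairwise (Function.onFun Disjoint
        (fun i => X ⁻¹' {x | t < c i * x} ∩ B i)) :=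
      fun i j hij => (hBdisj hij).mono Set.inter_subset_right Set.inter_subset_right
    have hRHS : ∑ i, P {ω | t < c i * X ω} * P (B i)
        ≤ P {ω | t < ∑ i, c i * X ω * (B i).indicator (fun _ => (1:ℝ)) ω} := by
      calc ∑ i, P {ω | t < c i * X ω} * P (B i)
          = ∑ i, P (X ⁻¹' {x | t < c i * x} ∩ B i) := by
            exact Finset.sum_congr rfl fun i _ => (hBi i).symm
        _ = P (⋃ i, X ⁻¹' {x | t < c i * x} ∩ B i) := by
            rw [measure_iUnion hdisj fun i => ((hXm (hmeasS i)).inter (hBmeas i))]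
            exact (tsum_fintype _).symm
        _ ≤ _ := measure_mono hsub
    refine le_trans ?_ hRHS
    rw [hL, hPA, Finset.mul_sum]
    apply Finset.sum_le_sum
    intro i _
    calc P {ω | t < X ω} * (ENNReal.ofReal (c i) * P (B i))
        = (ENNReal.ofReal (c i) * P {ω | t < X ω}) * P (B i) := by ring
      _ ≤ P {ω | t < c i * X ω} * P (B i) :=
          mul_le_mul_left (key_ineq P α hα X hX (hc i) ht) _
end

section
/- Let X be a Pareto(α) random variable with α ∈ (0,1], c ∈ (0,1], and let A, B be events independent of X with ℙ(A) = c·ℙ(B). Then X·𝟙_A ≤_st c·X·𝟙_B. Moreover, if instead α > 1 (finite mean) and c < 1, then X·𝟙_A ≤_st c·X·𝟙_B fails. -/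
open MeasureTheory ProbabilityTheory Set

lemma indicator_preimage_one {Ω : Type*} (E : Set Ω) :
    (E.indicator (fun _ => (1:ℝ))) ⁻¹' {1} = E := by
  ext ω
  by_cases h : ω ∈ E <;> simp [Set.indicator_apply, h]

lemma aux_set_eq {Ω : Type*} (X : Ω → ℝ) (E : Set Ω) (d t : ℝ) (hd : 0 < d) (ht : 0 ≤ t) :
    {ω | t < d * X ω * E.indicator (fun _ => (1:ℝ)) ω}
      = X ⁻¹' (Set.Ioi (t/d)) ∩ (E.indicator (fun _ => (1:ℝ))) ⁻¹' {1} := by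
  ext ω
  by_cases h : ω ∈ E
  · simp [Set.indicator_apply, h, div_lt_iff₀ hd, mul_comm]
  · simp only [Set.mem_setOf_eq, Set.indicator_apply, h, if_neg, mul_zero,
      Set.mem_inter_iff, Set.mem_preimage, Set.mem_singleton_iff]
    simp [not_lt.2 ht, h]

lemma aux_measure {Ω : Type*} [MeasurableSpace Ω] (P : Measure Ω) (X : Ω → ℝ)
    (hXm : Measurable X) (E : Set Ω)
    (hind : IndepFun X (E.indicator (fun _ => (1:ℝ))) P) (d t : ℝ) (hd : 0 < d) (ht : 0 ≤ t) :
    P {ω | t < d * X ω * E.indicator (fun _ => (1:ℝ)) ω}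
      = P {ω | t/d < X ω} * P E := by
  rw [aux_set_eq X E d t hd ht,
    hind.measure_inter_preimage_eq_mul _ _ measurableSet_Ioi (measurableSet_singleton 1),
    indicator_preimage_one]
  rfl

/-- For `X ~ Pareto(α)`, `c ∈ (0,1]`, and events `A, B` independent of `X` with
`P(A) = c·P(B)`: if `α ∈ (0,1]` then `X·𝟙_A ≤_st c·X·𝟙_B`; whereas if `α > 1`
(finite mean), `c < 1` and `P(B) > 0`, the dominance fails. -/
theorem stmt11 {Ω : Type*} [MeasurableSpace Ω] (P : Measure Ω) [IsProbabilityMeasure P]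
    (α c : ℝ) (hα : 0 < α) (hc : 0 < c) (hc1 : c ≤ 1)
    (X : Ω → ℝ) (hX : IsPareto P X α)
    (A B : Set Ω) (hA : MeasurableSet A) (hB : MeasurableSet B)
    (hindA : IndepFun X (A.indicator (fun _ => (1:ℝ))) P)
    (hindB : IndepFun X (B.indicator (fun _ => (1:ℝ))) P)
    (hPA : P A = ENNReal.ofReal c * P B) :
    (α ≤ 1 →
      ∀ t : ℝ, P {ω | t < X ω * A.indicator (fun _ => (1:ℝ)) ω}
        ≤ P {ω | t < c * X ω * B.indicator (fun _ => (1:ℝ)) ω})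
    ∧ (1 < α → c < 1 → P B ≠ 0 →
      ¬ ∀ t : ℝ, P {ω | t < X ω * A.indicator (fun _ => (1:ℝ)) ω}
        ≤ P {ω | t < c * X ω * B.indicator (fun _ => (1:ℝ)) ω}) := by
  obtain ⟨hXm, hX1, hXs⟩ := hX
  -- survival function for s < 1
  have hsurv_lt : ∀ s : ℝ, s < 1 → P {ω | s < X ω} = 1 := by
    intro s hs
    refine le_antisymm prob_le_one ?_
    calc (1:ENNReal) = P {ω | 1 ≤ X ω} := hX1.symm
      _ ≤ P {ω | s < X ω} := measure_mono fun ω h => lt_of_lt_of_le hs h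
  -- measure of A-set for t ≥ 0
  have hmA : ∀ t : ℝ, 0 ≤ t →
      P {ω | t < X ω * A.indicator (fun _ => (1:ℝ)) ω} = P {ω | t < X ω} * P A := by
    intro t ht
    have := aux_measure P X hXm A hindA 1 t one_pos ht
    simpa using this
  have hmB : ∀ t : ℝ, 0 ≤ t →
      P {ω | t < c * X ω * B.indicator (fun _ => (1:ℝ)) ω} = P {ω | t/c < X ω} * P B := by
    intro t ht
    exact aux_measure P X hXm B hindB c t hc ht
  constructor
  · intro hα1 t
    by_cases ht : 0 ≤ t
    · rw [hmA t ht, hmB t ht, hPA, ← mul_assoc]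
      refine mul_le_mul_left ?_ (P B)
      -- show P {X > t} * ofReal c ≤ P {X > t/c}
      by_cases htc : t / c < 1
      · rw [hsurv_lt _ htc]
        calc P {ω | t < X ω} * ENNReal.ofReal c ≤ 1 * 1 := by
              exact mul_le_mul' prob_le_one (ENNReal.ofReal_le_one.2 hc1)
          _ = 1 := one_mul 1
      · push_neg at htc
        have htpos : 0 < t := lt_of_lt_of_le hc (by
          have := (le_div_iff₀ hc).1 htc; linarith)
        have hca : c ≤ c ^ α := by
          calc c = c ^ (1:ℝ) := (Real.rpow_one c).symm
            _ ≤ c ^ α := Real.rpow_le_rpow_of_exponent_ge hc hc1 hα1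
        have hdiv : (t / c) ^ (-α) = t ^ (-α) * c ^ α := by
          rw [Real.div_rpow (le_of_lt htpos) (le_of_lt hc),
            Real.rpow_neg (le_of_lt htpos), Real.rpow_neg (le_of_lt hc), div_eq_mul_inv, inv_inv]
        have htna : (0:ℝ) ≤ t ^ (-α) := Real.rpow_nonneg (le_of_lt htpos) _
        by_cases ht1 : t < 1
        · rw [hsurv_lt t ht1, hXs (t/c) htc, one_mul, hdiv]
          refine ENNReal.ofReal_le_ofReal ?_
          have h1t : (1:ℝ) ≤ t ^ (-α) :=
            Real.one_le_rpow_of_pos_of_le_one_of_nonpos htpos (le_of_lt ht1)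
              (by linarith)
          calc c = 1 * c := (one_mul c).symm
            _ ≤ t ^ (-α) * c ^ α := mul_le_mul h1t hca (le_of_lt hc) (by linarith)
        · push_neg at ht1
          rw [hXs t ht1, hXs (t/c) htc, hdiv, ← ENNReal.ofReal_mul htna]
          exact ENNReal.ofReal_le_ofReal
            (mul_le_mul_of_nonneg_left hca htna)
    · push_neg at ht
      -- RHS has measure 1
      have : P {ω | t < c * X ω * B.indicator (fun _ => (1:ℝ)) ω} = 1 := by
        refine le_antisymm prob_le_one ?_
        calc (1:ENNReal) = P {ω | 1 ≤ X ω} := hX1.symm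
          _ ≤ _ := by
            refine measure_mono fun ω h => ?_
            simp only [Set.mem_setOf_eq] at h ⊢
            by_cases hω : ω ∈ B
            · rw [Set.indicator_of_mem hω, mul_one]
              nlinarith
            · rw [Set.indicator_of_notMem hω, mul_zero]
              exact ht
      rw [this]; exact prob_le_one
  · intro hα1 hc1' hPB h
    have h1 := h 1
    rw [hmA 1 zero_le_one, hmB 1 zero_le_one, hPA, ← mul_assoc] at h1
    rw [hXs 1 le_rfl] at h1
    have h1c : (1:ℝ) ≤ 1/c := (le_div_iff₀ hc).2 (by linarith)
    rw [hXs (1/c) h1c] at h1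
    have hre : (1/c) ^ (-α) = c ^ α := by
      rw [one_div, Real.inv_rpow (le_of_lt hc), Real.rpow_neg (le_of_lt hc), inv_inv]
    rw [hre] at h1
    simp only [Real.one_rpow, ENNReal.ofReal_one, one_mul] at h1
    have hPBfin : P B ≠ ⊤ := measure_ne_top P B
    have hcan := (ENNReal.mul_le_mul_iff_left hPB hPBfin).1 h1
    have hle : c ≤ c ^ α :=
      (ENNReal.ofReal_le_ofReal_iff (Real.rpow_nonneg (le_of_lt hc) α)).1 hcan
    have hlt : c ^ α < c := by
      calc c ^ α < c ^ (1:ℝ) := Real.rpow_lt_rpow_of_exponent_gt hc hc1' hα1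
        _ = c := Real.rpow_one c
    linarith
end
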